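/- arXiv:1704.00232 — 6 statements merged into one kernel-verified Lean document; each statement's English description precedes it below -/
import Mathlib

section
/- Let p be an odd prime and X a finite set with |X| = p². Let G be a transitive subgroup of Sym(X). If there exists a regular subgroup of Sym(X) which is cyclic of order p² and is normalized by G, then there exists no regular subgroup of Sym(X) isomorphic to (ℤ/pℤ) × (ℤ/pℤ) normalized by G. (Group-theoretic form, via the Greither–Pareigis correspondence, of: a separable field extension of degree p², p an odd prime, has at most one type of Hopf Galois structures, either cyclic or C_p × C_p.) -/
set_option linter.unusedSectionVars false
set_option maxHeartbeats 1000000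

open Equiv MulAction Multiplicative

section Helpers

variable {X : Type*} [Finite X]

/-- Freeness: in a regular subgroup, an element fixing a point is trivial. -/
lemma regular_free {N : Subgroup (Perm X)}
    (htrans : ∀ x y : X, ∃ n ∈ N, n x = y) (hcard : Nat.card ↥N = Nat.card X)
    {a : Perm X} (ha : a ∈ N) {x : X} (hfix : a x = x) : a = 1 := by
  have hsurj : Function.Surjective (fun n : ↥N => (n : Perm X) x) := by
    intro y
    obtain ⟨n, hn, hnx⟩ := htrans x y
    exact ⟨⟨n, hn⟩, hnx⟩
  have hbij := (Nat.bijective_iff_surjective_and_card _).mpr ⟨hsurj, hcard⟩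
  have : (⟨a, ha⟩ : ↥N) = (1 : ↥N) := by
    apply hbij.injective
    simpa using hfix
  simpa using congrArg (Subtype.val) this

/-- A transitive abelian subgroup of `Perm X` contains every permutation commuting with it. -/
lemma mem_of_commute {M : Subgroup (Perm X)}
    (htrans : ∀ x y : X, ∃ m ∈ M, m x = y)
    (hab : ∀ a ∈ M, ∀ b ∈ M, a * b = b * a)
    {σ : Perm X} (hσ : ∀ m ∈ M, σ * m = m * σ) (x₀ : X) : σ ∈ M := by
  obtain ⟨a₀, ha₀, h0⟩ := htrans x₀ (σ x₀)
  have : σ = a₀ := by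
    ext x
    obtain ⟨b, hb, rfl⟩ := htrans x₀ x
    have h1 : σ (b x₀) = b (σ x₀) := by
      have := congrArg (fun f : Perm X => f x₀) (hσ b hb)
      simpa using this
    have h2 : b (a₀ x₀) = a₀ (b x₀) := by
      have := congrArg (fun f : Perm X => f x₀) (hab b hb a₀ ha₀)
      simpa using this
    rw [h1, ← h0, h2]
  rw [this]; exact ha₀

lemma stab_card_dvd {H K : Subgroup (Perm X)} (hle : K ≤ H) (x : X) :
    Nat.card (stabilizer ↥K x) ∣ Nat.card (stabilizer ↥H x) := by
  classical
  let ι : ↥K →* ↥H := Subgroup.inclusion hle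
  have hinj : Function.Injective ι := Subgroup.inclusion_injective hle
  have hcard : Nat.card ((stabilizer ↥K x).map ι) = Nat.card (stabilizer ↥K x) :=
    (Nat.card_congr ((stabilizer ↥K x).equivMapOfInjective ι hinj).toEquiv).symm
  have hsub : (stabilizer ↥K x).map ι ≤ stabilizer ↥H x := by
    rintro g ⟨q, hq, rfl⟩
    have : (q : Perm X) • x = x := hq
    exact this
  rw [← hcard]
  exact Subgroup.card_dvd_of_le hsub

lemma orbit_stab (H : Subgroup (Perm X)) (x : X) :
    Nat.card (orbit ↥H x) * Nat.card (stabilizer ↥H x) = Nat.card ↥H := by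
  classical
  letI : Fintype X := Fintype.ofFinite X
  letI : Fintype ↥H := Fintype.ofFinite _
  letI : Fintype (orbit ↥H x) := Fintype.ofFinite _
  letI : Fintype (stabilizer ↥H x) := Fintype.ofFinite _
  simp only [Nat.card_eq_fintype_card]
  exact card_orbit_mul_card_stabilizer_eq_card_group ↥H x

lemma exists_transitive_pSubgroup {p : ℕ} [Fact p.Prime]
    (hX : Nat.card X = p ^ 2) (G : Subgroup (Perm X)) (hG : ∀ x y : X, ∃ g ∈ G, g x = y) :
    ∃ Q : Subgroup (Perm X), Q ≤ G ∧ IsPGroup p ↥Q ∧ ∀ x y : X, ∃ q ∈ Q, q x = y := by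
  classical
  have hp : p.Prime := Fact.out
  obtain ⟨P⟩ : Nonempty (Sylow p ↥G) := inferInstance
  refine ⟨(P : Subgroup ↥G).map G.subtype, Subgroup.map_subtype_le _, P.2.map _, ?_⟩
  set Q : Subgroup (Perm X) := (P : Subgroup ↥G).map G.subtype with hQdef
  have hQle : Q ≤ G := Subgroup.map_subtype_le _
  have hcardQ : Nat.card ↥Q = Nat.card ↥(P : Subgroup ↥G) :=
    (Nat.card_congr ((P : Subgroup ↥G).equivMapOfInjective _ G.subtype_injective).toEquiv).symm
  suffices h : ∀ x : X, Function.Surjective (fun z : orbit ↥Q x => (z : X)) by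
    intro x y
    obtain ⟨⟨z, hz⟩, hzy⟩ := h x y
    obtain ⟨q, hq⟩ := hz
    exact ⟨q, q.2, by simpa [Subgroup.smul_def, Perm.smul_def] using hq.trans hzy⟩
  intro x
  obtain ⟨n, hn⟩ : ∃ n, Nat.card ↥(P : Subgroup ↥G) = p ^ n := IsPGroup.iff_card.mp P.2
  have hidx : ¬ p ∣ (P : Subgroup ↥G).index := P.not_dvd_index
  have hGcard : Nat.card ↥(P : Subgroup ↥G) * (P : Subgroup ↥G).index = Nat.card ↥G :=
    Subgroup.card_mul_index _
  -- orbit of G is everything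
  have horbG : orbit ↥G x = Set.univ := by
    ext y
    simp only [Set.mem_univ, iff_true]
    obtain ⟨g, hg, hgx⟩ := hG x y
    exact ⟨⟨g, hg⟩, by simp [Perm.smul_def, hgx]⟩
  have horbGcard : Nat.card (orbit ↥G x) = p ^ 2 := by
    rw [horbG, ← hX]
    exact Nat.card_congr (Equiv.Set.univ X)
  have hOS_G := orbit_stab G x
  have hOS_Q := orbit_stab Q x
  rw [horbGcard] at hOS_G
  -- stabilizer cards
  obtain ⟨m, hmn, hm⟩ : ∃ m, m ≤ n ∧ Nat.card (stabilizer ↥Q x) = p ^ m := by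
    have hdvd : Nat.card (stabilizer ↥Q x) ∣ p ^ n := by
      rw [← hn, ← hcardQ]
      exact Subgroup.card_subgroup_dvd_card _
    exact (Nat.dvd_prime_pow hp).mp hdvd
  have hsQG : Nat.card (stabilizer ↥Q x) ∣ Nat.card (stabilizer ↥G x) := stab_card_dvd hQle x
  -- p ^ (m + 2) divides p ^ n
  have key : m + 2 ≤ n := by
    have h1 : p ^ (m + 2) ∣ p ^ n * (P : Subgroup ↥G).index := by
      calc p ^ (m + 2) = p ^ m * p ^ 2 := by ring
        _ ∣ Nat.card (stabilizer ↥G x) * p ^ 2 := mul_dvd_mul_right (hm ▸ hsQG) _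
        _ = Nat.card ↥G := by rw [mul_comm]; exact hOS_G
        _ = p ^ n * (P : Subgroup ↥G).index := by rw [← hGcard, hn]
    have h2 : (p ^ (m + 2)).Coprime (P : Subgroup ↥G).index :=
      Nat.Coprime.pow_left _ ((Nat.Prime.coprime_iff_not_dvd hp).mpr hidx)
    have h3 : p ^ (m + 2) ∣ p ^ n := (Nat.Coprime.dvd_of_dvd_mul_right h2) h1
    exact (Nat.pow_dvd_pow_iff_le_right hp.one_lt).mp h3
  -- orbit card of Q
  have horbQ : Nat.card (orbit ↥Q x) = p ^ (n - m) := by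
    have : Nat.card (orbit ↥Q x) * p ^ m = p ^ n := by rw [← hm, hOS_Q, hcardQ, hn]
    have hpm : 0 < p ^ m := pow_pos hp.pos m
    have h2 : p ^ n = p ^ (n - m) * p ^ m := by
      rw [← pow_add]; congr 1; omega
    rw [h2] at this
    exact Nat.eq_of_mul_eq_mul_right hpm this
  have hge : p ^ 2 ≤ Nat.card (orbit ↥Q x) := by
    rw [horbQ]
    exact Nat.pow_le_pow_right hp.one_lt.le (by omega)
  have hle2 : Nat.card (orbit ↥Q x) ≤ Nat.card X :=
    Nat.card_le_card_of_injective _ Subtype.val_injective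
  have hcardeq : Nat.card (orbit ↥Q x) = Nat.card X := le_antisymm hle2 (hX ▸ hge)
  exact ((Nat.bijective_iff_injective_and_card _).mpr ⟨Subtype.val_injective, hcardeq⟩).surjective

end Helpers

lemma nt_lemma {p : ℕ} (hp : p.Prime) (hodd : Odd p) {k : ℤ}
    (hk : ((p : ℤ)) ^ 2 ∣ k ^ p - 1)
    (hS : ((p : ℤ)) ^ 2 ∣ ∑ i ∈ Finset.range p, k ^ i) : False := by
  haveI : Fact p.Prime := ⟨hp⟩
  have hcast : ∀ z : ℤ, ((p : ℤ)) ^ 2 ∣ z ↔ ((z : ZMod (p ^ 2)) = 0) := by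
    intro z
    rw [ZMod.intCast_zmod_eq_zero_iff_dvd]
    push_cast
    rfl
  set K : ZMod (p ^ 2) := (k : ZMod (p ^ 2)) with hK
  have hK1 : K ^ p = 1 := by
    have := (hcast _).mp hk
    push_cast at this
    linear_combination this
  -- k ≡ 1 mod p
  have hkp : (p : ℤ) ∣ k - 1 := by
    have hdvd : (p : ℤ) ∣ k ^ p - 1 := dvd_trans (by rw [sq]; exact Dvd.intro p rfl) hk
    have h1 : ((k : ZMod p)) ^ p = 1 := by
      have : (((k ^ p - 1 : ℤ)) : ZMod p) = 0 := by
        rw [ZMod.intCast_zmod_eq_zero_iff_dvd]; exact hdvd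
      push_cast at this
      linear_combination this
    have h2 : ((k : ZMod p)) ^ p = (k : ZMod p) := ZMod.pow_card _
    have : ((k - 1 : ℤ) : ZMod p) = 0 := by push_cast; rw [← h2, h1]; ring
    rwa [ZMod.intCast_zmod_eq_zero_iff_dvd] at this
  obtain ⟨t, ht⟩ := hkp
  set T : ZMod (p ^ 2) := (t : ZMod (p ^ 2)) with hT
  have hKT : K = 1 + (p : ZMod (p ^ 2)) * T := by
    have : (k : ℤ) = 1 + p * t := by linarith [ht]
    rw [hK, this]; push_cast; ring
  have hp2 : ((p : ZMod (p ^ 2))) ^ 2 = 0 := by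
    have : (((p ^ 2 : ℕ)) : ZMod (p ^ 2)) = 0 := ZMod.natCast_self _
    push_cast at this
    exact this
  -- K ^ i = 1 + i * (p * T)
  have hpow : ∀ i : ℕ, K ^ i = 1 + (i : ZMod (p ^ 2)) * ((p : ZMod (p ^ 2)) * T) := by
    intro i
    induction i with
    | zero => simp
    | succ i ih =>
      push_cast
      linear_combination K * ih + (1 + (i : ZMod (p ^ 2)) * ((p : ZMod (p ^ 2)) * T)) * hKT
        + ((i : ZMod (p ^ 2)) * T * T) * hp2
  -- sum
  have hsum : (∑ i ∈ Finset.range p, K ^ i) = (p : ZMod (p ^ 2)) := by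
    have : (∑ i ∈ Finset.range p, K ^ i)
        = ∑ i ∈ Finset.range p, (1 + (i : ZMod (p ^ 2)) * ((p : ZMod (p ^ 2)) * T)) := by
      exact Finset.sum_congr rfl fun i _ => hpow i
    rw [this, Finset.sum_add_distrib]
    simp only [Finset.sum_const, Finset.card_range, nsmul_eq_mul, mul_one]
    have hsum2 : (∑ i ∈ Finset.range p, ((i : ZMod (p ^ 2)) * ((p : ZMod (p ^ 2)) * T)))
        = ((∑ i ∈ Finset.range p, (i : ℕ) : ℕ) : ZMod (p ^ 2)) * ((p : ZMod (p ^ 2)) * T) := by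
      rw [← Finset.sum_mul]
      push_cast
      rfl
    rw [hsum2]
    obtain ⟨a, ha⟩ : ∃ a, p - 1 = 2 * a := by
      obtain ⟨b, hb⟩ := hodd
      exact ⟨b, by omega⟩
    have hgauss : (∑ i ∈ Finset.range p, (i : ℕ)) = p * a := by
      have h2 : (∑ i ∈ Finset.range p, i) * 2 = (p * a) * 2 := by
        rw [Finset.sum_range_id_mul_two p, ha]; ring
      omega
    rw [hgauss]
    have : ((p * a : ℕ) : ZMod (p ^ 2)) * ((p : ZMod (p ^ 2)) * T)
        = ((p : ZMod (p^2)) ^ 2) * (a * T) := by push_cast; ring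
    rw [this, hp2]
    ring
  have hfin : ((p : ℕ) : ZMod (p ^ 2)) = 0 := by
    have h0 := (hcast _).mp hS
    rw [Int.cast_sum] at h0
    push_cast at h0
    rw [← hsum, hK]
    exact_mod_cast h0
  rw [ZMod.natCast_eq_zero_iff] at hfin
  have := Nat.le_of_dvd hp.pos hfin
  nlinarith [hp.two_le]

section Nil
variable {p : ℕ} {A : Type*} [AddCommGroup A] [Finite A]

lemma range_mul (f g : AddMonoid.End A) :
    AddMonoidHom.range (f * g) = (AddMonoidHom.range g).map f := by
  ext x
  constructor
  · rintro ⟨y, rfl⟩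
    exact ⟨g y, ⟨y, rfl⟩, rfl⟩
  · rintro ⟨z, ⟨y, rfl⟩, rfl⟩
    exact ⟨y, rfl⟩

lemma nil_sq (hp : p.Prime) (hcard : Nat.card A = p ^ 2) (f : AddMonoid.End A) {m : ℕ} (hf : f ^ m = 0) :
    f * f = 0 := by
  classical
  have hA1 : Nat.card A ≠ 1 := by
    rw [hcard]
    intro h
    have := hp.one_lt
    nlinarith [hp.two_le]
  -- basic facts about ranges
  set r : ℕ → AddSubgroup A := fun j => AddMonoidHom.range (f ^ j : AddMonoid.End A) with hr
  have hrsucc : ∀ j, r (j + 1) = (r j).map f := by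
    intro j
    rw [hr]
    simp only
    rw [pow_succ']
    exact range_mul f (f ^ j)
  have hrm : r m = ⊥ := by
    rw [hr]
    simp only [hf]
    ext x
    simp only [AddMonoidHom.mem_range, AddSubgroup.mem_bot]
    constructor
    · rintro ⟨y, rfl⟩; rfl
    · rintro rfl; exact ⟨0, rfl⟩
  have hstab : ∀ j, r (j + 1) = r j → ∀ i, r (j + i) = r j := by
    intro j hj i
    induction i with
    | zero => rfl
    | succ i ih => rw [← Nat.add_assoc, hrsucc, ih, ← hrsucc, hj]
  -- m must be positive (else A trivial)
  rcases Nat.eq_zero_or_pos m with rfl | hm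
  · exfalso
    apply hA1
    have : ∀ a : A, a = 0 := by
      intro a
      have h0 : r 0 = ⊥ := hrm
      have : a ∈ r 0 := ⟨a, by rw [pow_zero]; rfl⟩
      rwa [h0, AddSubgroup.mem_bot] at this
    exact Nat.card_eq_one_iff_unique.mpr ⟨⟨fun a b => by rw [this a, this b]⟩, ⟨0⟩⟩
  -- card of r 1
  have hdvd1 : Nat.card (r 1) ∣ p ^ 2 := by
    rw [← hcard]
    exact AddSubgroup.card_addSubgroup_dvd_card _
  obtain ⟨j, hj2, hjc⟩ := (Nat.dvd_prime_pow hp).mp hdvd1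
  interval_cases j
  · -- card r 1 = 1, so f = 0
    have hbot : r 1 = ⊥ := AddSubgroup.eq_bot_of_card_eq _ (by simpa using hjc)
    refine AddMonoidHom.ext fun x => ?_
    have : f x ∈ r 1 := ⟨x, by rw [pow_one]; rfl⟩
    rw [hbot, AddSubgroup.mem_bot] at this
    show f (f x) = 0
    rw [this, map_zero]
  · -- card r 1 = p
    have hdvd2 : Nat.card (r 2) ∣ Nat.card (r 1) := by
      apply AddSubgroup.card_dvd_of_le
      rw [hrsucc 1]
      rintro x ⟨z, ⟨y, rfl⟩, rfl⟩
      exact ⟨f y, by rw [pow_one]; rfl⟩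
    rw [hjc, pow_one] at hdvd2
    rcases (Nat.Prime.eq_one_or_self_of_dvd hp _ hdvd2) with h2 | h2
    · -- r 2 = ⊥ : done
      have hbot : r 2 = ⊥ := AddSubgroup.eq_bot_of_card_eq _ h2
      refine AddMonoidHom.ext fun x => ?_
      have : (f ^ 2) x ∈ r 2 := ⟨x, rfl⟩
      rw [hbot, AddSubgroup.mem_bot] at this
      have h2x : (f * f) x = (f ^ 2) x := by rw [pow_two]
      refine h2x.trans (this.trans ?_)
      rfl
    · -- r 2 = r 1 : stabilizes, contradiction
      exfalso
      have heq : r 2 = r 1 := by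
        apply AddSubgroup.eq_of_le_of_card_ge
        · rw [hrsucc 1]
          rintro x ⟨z, ⟨y, rfl⟩, rfl⟩
          exact ⟨f y, by rw [pow_one]; rfl⟩
        · rw [h2, hjc, pow_one]
      have := hstab 1 heq (m - 1)
      rw [Nat.add_sub_cancel' hm] at this
      rw [hrm] at this
      have : Nat.card (r 1) = 1 := by rw [← this, AddSubgroup.card_bot]
      rw [hjc, pow_one] at this
      exact hp.one_lt.ne' this
  · -- card r 1 = p ^ 2 : r 1 = ⊤, f surjective forever, contradiction
    exfalso
    have htop : r 1 = ⊤ := AddSubgroup.eq_top_of_card_eq _ (by rw [hjc, hcard])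
    have h10 : r 1 = r 0 := by
      rw [htop]
      symm
      rw [hr]
      simp only [pow_zero]
      ext x
      simp only [AddSubgroup.mem_top, iff_true, AddMonoidHom.mem_range]
      exact ⟨x, rfl⟩
    have := hstab 0 h10 m
    rw [Nat.zero_add, hrm] at this
    apply hA1
    have hbot : ∀ a : A, a ∈ r 0 := fun a => ⟨a, rfl⟩
    have : ∀ a : A, a = 0 := by
      intro a
      have h := hbot a
      rw [← this] at h
      rwa [AddSubgroup.mem_bot] at h
    exact Nat.card_eq_one_iff_unique.mpr ⟨⟨fun a b => by rw [this a, this b]⟩, ⟨0⟩⟩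
end Nil

section Core
variable {p : ℕ}

lemma end_charP (hp : p.Prime) : CharP (AddMonoid.End (ZMod p × ZMod p)) p := by
  haveI : Fact p.Prime := ⟨hp⟩
  constructor
  intro n
  rw [(@CharP.cast_eq_zero_iff (ZMod p × ZMod p) _ p (Prod.charP _ _ p) n).symm]
  constructor
  · intro h
    have h1 : (n : AddMonoid.End (ZMod p × ZMod p)) (1 : ZMod p × ZMod p) = 0 := by rw [h]; rfl
    rw [AddMonoid.End.natCast_apply, nsmul_eq_mul, mul_one] at h1
    exact h1
  · intro h
    refine AddMonoidHom.ext fun x => ?_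
    refine (AddMonoid.End.natCast_apply n x).trans ?_
    rw [nsmul_eq_mul, h, zero_mul]
    rfl

lemma end_pow_p {r : ℕ} (hp : p.Prime) (hodd : Odd p)
    (L : AddMonoid.End (ZMod p × ZMod p)) (hL : L ^ (p ^ r) = 1) :
    L ^ p = 1 ∧ ∑ i ∈ Finset.range p, L ^ i = 0 := by
  haveI : Fact p.Prime := ⟨hp⟩
  haveI : NeZero p := ⟨hp.ne_zero⟩
  haveI : CharP (AddMonoid.End (ZMod p × ZMod p)) p := end_charP hp
  have h2p := hp.two_le
  have hcA : Nat.card (ZMod p × ZMod p) = p ^ 2 := by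
    rw [Nat.card_prod, Nat.card_zmod]; ring
  set ν : AddMonoid.End (ZMod p × ZMod p) := L - 1 with hν
  have hcomm : Commute L (1 : AddMonoid.End (ZMod p × ZMod p)) := Commute.one_right L
  have hnil : ν ^ (p ^ r) = 0 := by
    rw [hν, sub_pow_char_pow_of_commute p r hcomm, hL, one_pow, sub_self]
  have hν2 : ν * ν = 0 := nil_sq hp hcA ν hnil
  have hν2' : ν ^ 2 = 0 := by rw [pow_two]; exact hν2
  have hνp : ν ^ p = 0 := by
    have h : ν ^ p = ν ^ 2 * ν ^ (p - 2) := by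
      rw [← pow_add]
      congr 1
      omega
    rw [h, hν2', zero_mul]
  have hLν : L = 1 + ν := by rw [hν]; abel
  constructor
  · rw [hLν, add_pow_char_of_commute p (Commute.one_left ν), one_pow, hνp, add_zero]
  · -- L ^ i = 1 + i * ν
    have hpow : ∀ i : ℕ, L ^ i = 1 + (i : AddMonoid.End (ZMod p × ZMod p)) * ν := by
      intro i
      induction i with
      | zero => simp
      | succ i ih =>
        rw [pow_succ, ih]
        rw [hLν]
        have hexp : (1 + (i : AddMonoid.End (ZMod p × ZMod p)) * ν) * (1 + ν)
            = 1 + ((i : AddMonoid.End (ZMod p × ZMod p)) + 1) * ν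
              + (i : AddMonoid.End (ZMod p × ZMod p)) * (ν * ν) := by noncomm_ring
        rw [hexp, hν2, mul_zero, add_zero]
        push_cast
        ring_nf
    have hsum : (∑ i ∈ Finset.range p, L ^ i)
        = p • (1 : AddMonoid.End (ZMod p × ZMod p))
          + ((∑ i ∈ Finset.range p, (i : ℕ) : ℕ) : AddMonoid.End (ZMod p × ZMod p)) * ν := by
      rw [Finset.sum_congr rfl fun i _ => hpow i, Finset.sum_add_distrib]
      congr 1
      · simp
      · rw [← Finset.sum_mul, Nat.cast_sum]
    rw [hsum]
    have h1 : ((p : ℕ) : AddMonoid.End (ZMod p × ZMod p)) = 0 := CharP.cast_eq_zero _ p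
    have h2 : p • (1 : AddMonoid.End (ZMod p × ZMod p)) = 0 := by
      rw [nsmul_eq_mul, mul_one, h1]
    obtain ⟨a, ha⟩ : ∃ a, p - 1 = 2 * a := by
      obtain ⟨b, hb⟩ := hodd
      exact ⟨b, by omega⟩
    have hgauss : (∑ i ∈ Finset.range p, (i : ℕ)) = p * a := by
      have hg2 : (∑ i ∈ Finset.range p, i) * 2 = (p * a) * 2 := by
        rw [Finset.sum_range_id_mul_two p, ha]; ring
      omega
    rw [hgauss, h2, Nat.cast_mul, h1, zero_mul, zero_mul, add_zero]
end Core

lemma lemE {p : ℕ} (hp : p.Prime) (hodd : Odd p) {X : Type*} [Finite X]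
    {N : Subgroup (Perm X)}
    (hNtrans : ∀ x y : X, ∃ a ∈ N, a x = y) (hNcard : Nat.card ↥N = Nat.card X)
    {n : Perm X} (hnN : n ∈ N) (hord : orderOf n = p ^ 2)
    (hgen : ∀ a ∈ N, ∃ j : ℤ, a = n ^ j)
    {u : Perm X} (hnorm : ∀ a ∈ N, u * a * u⁻¹ ∈ N)
    (x₀ : X) (hux : u x₀ = n x₀) (hup : u ^ p = 1) : False := by
  obtain ⟨k, hk⟩ := hgen _ (hnorm n hnN)
  -- iterated conjugation
  have hconj : ∀ j : ℕ, u ^ j * n * (u ^ j)⁻¹ = n ^ (k ^ j) := by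
    intro j
    induction j with
    | zero => simp
    | succ j ih =>
      have h0 : u ^ (j + 1) * n * (u ^ (j + 1))⁻¹ = u * (u ^ j * n * (u ^ j)⁻¹) * u⁻¹ := by
        rw [pow_succ']
        group
      rw [h0, ih, ← conj_zpow, hk, ← zpow_mul]
      congr 1
      rw [pow_succ]
      ring
  have hswap : ∀ j : ℕ, u ^ j * n = n ^ (k ^ j) * u ^ j := by
    intro j
    calc u ^ j * n = (u ^ j * n * (u ^ j)⁻¹) * u ^ j := by group
      _ = n ^ (k ^ j) * u ^ j := by rw [hconj j]
  -- trajectory of x₀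
  have htraj : ∀ j : ℕ, (u ^ j) x₀ = (n ^ (∑ i ∈ Finset.range j, k ^ i)) x₀ := by
    intro j
    induction j with
    | zero => simp
    | succ j ih =>
      calc (u ^ (j + 1)) x₀ = (u ^ j) (u x₀) := by rw [pow_succ, Perm.mul_apply]
        _ = (u ^ j * n) x₀ := by rw [hux, Perm.mul_apply]
        _ = (n ^ (k ^ j)) ((u ^ j) x₀) := by rw [hswap j, Perm.mul_apply]
        _ = (n ^ (k ^ j) * n ^ (∑ i ∈ Finset.range j, k ^ i)) x₀ := by
            rw [ih, Perm.mul_apply]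
        _ = (n ^ (∑ i ∈ Finset.range (j + 1), k ^ i)) x₀ := by
            rw [← zpow_add, Finset.sum_range_succ, add_comm]
  -- two divisibilities
  have horddvd : ∀ z : ℤ, n ^ z = 1 → ((p : ℤ)) ^ 2 ∣ z := by
    intro z hz
    have := orderOf_dvd_iff_zpow_eq_one.mpr hz
    rw [hord] at this
    exact_mod_cast this
  have hk1 : ((p : ℤ)) ^ 2 ∣ k ^ p - 1 := by
    apply horddvd
    have := hconj p
    rw [hup] at this
    simp only [one_mul, inv_one, mul_one] at this
    rw [zpow_sub, ← this, zpow_one, mul_inv_cancel]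
  have hS : ((p : ℤ)) ^ 2 ∣ ∑ i ∈ Finset.range p, k ^ i := by
    apply horddvd
    have h1 := htraj p
    rw [hup] at h1
    simp only [Perm.one_apply] at h1
    exact regular_free hNtrans hNcard (zpow_mem hnN _) h1.symm
  exact nt_lemma hp hodd hk1 hS

lemma lemD {p r : ℕ} (hp : p.Prime) (hodd : Odd p) {X : Type*} [Finite X]
    {M : Subgroup (Perm X)}
    (hMtrans : ∀ x y : X, ∃ m ∈ M, m x = y) (hMcard : Nat.card ↥M = Nat.card X)
    (μ : ↥M ≃* Multiplicative (ZMod p × ZMod p))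
    {g : Perm X} (hg : ∀ a ∈ M, g * a * g⁻¹ ∈ M) (hgr : g ^ (p ^ r) = 1)
    (x₀ : X) : g ^ p = 1 := by
  classical
  -- conjugation automorphism on M
  let conjM : ↥M → ↥M := fun m => ⟨g * (m : Perm X) * g⁻¹, hg _ m.2⟩
  have hconjM : ∀ m m' : ↥M, conjM (m * m') = conjM m * conjM m' := by
    intro m m'
    apply Subtype.ext
    show g * ((m : Perm X) * (m' : Perm X)) * g⁻¹
      = (g * (m : Perm X) * g⁻¹) * (g * (m' : Perm X) * g⁻¹)
    group
  -- the induced additive endomorphism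
  let L : AddMonoid.End (ZMod p × ZMod p) :=
    AddMonoidHom.mk' (fun a => toAdd (μ (conjM (μ.symm (ofAdd a)))))
      (by
        intro a b
        show toAdd (μ (conjM (μ.symm (ofAdd (a + b)))))
          = toAdd (μ (conjM (μ.symm (ofAdd a)))) + toAdd (μ (conjM (μ.symm (ofAdd b))))
        rw [ofAdd_add, map_mul, hconjM, map_mul, toAdd_mul])
  have hLdef : ∀ m : ↥M, μ.symm (ofAdd (L (toAdd (μ m)))) = conjM m := by
    intro m
    show μ.symm (ofAdd (toAdd (μ (conjM (μ.symm (ofAdd (toAdd (μ m)))))))) = conjM m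
    simp
  -- iterated conjugation corresponds to powers of L
  have hLit : ∀ (j : ℕ) (m : ↥M),
      g ^ j * (m : Perm X) * (g ^ j)⁻¹
        = ((μ.symm (ofAdd ((L ^ j) (toAdd (μ m))))) : Perm X) := by
    intro j
    induction j with
    | zero =>
      intro m
      simp
    | succ j ih =>
      intro m
      have h0 : g ^ (j + 1) * (m : Perm X) * (g ^ (j + 1))⁻¹
          = g * (g ^ j * (m : Perm X) * (g ^ j)⁻¹) * g⁻¹ := by
        rw [pow_succ']
        group
      rw [h0, ih m]
      have h1 : g * ((μ.symm (ofAdd ((L ^ j) (toAdd (μ m))))) : Perm X) * g⁻¹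
          = ((conjM (μ.symm (ofAdd ((L ^ j) (toAdd (μ m)))))) : Perm X) := rfl
      rw [h1, ← hLdef]
      congr 2
      simp only [MulEquiv.apply_symm_apply, toAdd_ofAdd]
      show L ((L ^ j) (toAdd (μ m))) = (L ^ (j + 1)) (toAdd (μ m))
      rw [pow_succ']
      rfl
  -- L ^ (p ^ r) = 1
  have hL1 : L ^ (p ^ r) = 1 := by
    refine AddMonoidHom.ext fun a => ?_
    have := hLit (p ^ r) (μ.symm (ofAdd a))
    rw [hgr] at this
    simp only [one_mul, inv_one, mul_one] at this
    have h2 : μ.symm (ofAdd a)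
        = μ.symm (ofAdd ((L ^ (p ^ r)) (toAdd (μ (μ.symm (ofAdd a)))))) :=
      Subtype.coe_injective this
    have h3 := congrArg (fun z => toAdd (μ z)) h2
    simp only [MulEquiv.apply_symm_apply, toAdd_ofAdd] at h3
    exact h3.symm
  obtain ⟨hLp, hLsum⟩ := end_pow_p hp hodd L hL1
  -- g ^ p commutes with M
  have hcent : ∀ a ∈ M, g ^ p * a = a * g ^ p := by
    intro a ha
    have h3 := hLit p ⟨a, ha⟩
    rw [hLp] at h3
    have h4 : ((μ.symm (ofAdd ((1 : AddMonoid.End (ZMod p × ZMod p)) (toAdd (μ (⟨a, ha⟩ : ↥M)))))) : Perm X) = a := by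
      show ((μ.symm (ofAdd (toAdd (μ (⟨a, ha⟩ : ↥M))))) : Perm X) = a
      simp
    rw [h4] at h3
    calc g ^ p * a = (g ^ p * a * (g ^ p)⁻¹) * g ^ p := by group
      _ = a * g ^ p := by rw [h3]
  -- g ^ p ∈ M
  have hab : ∀ a ∈ M, ∀ b ∈ M, a * b = b * a := by
    intro a ha b hb
    have : (⟨a, ha⟩ : ↥M) * ⟨b, hb⟩ = ⟨b, hb⟩ * ⟨a, ha⟩ := by
      apply μ.injective
      rw [map_mul, map_mul, mul_comm]
    exact congrArg Subtype.val this
  have hgpM : g ^ p ∈ M := mem_of_commute hMtrans hab hcent x₀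
  -- trajectory of x₀
  obtain ⟨m₀, hm₀M, hm₀⟩ := hMtrans x₀ (g x₀)
  set a₀ : ZMod p × ZMod p := toAdd (μ ⟨m₀, hm₀M⟩) with ha₀
  have htraj : ∀ j : ℕ, (g ^ j) x₀
      = ((μ.symm (ofAdd ((∑ i ∈ Finset.range j, (L ^ i : AddMonoid.End (ZMod p × ZMod p))) a₀)) : ↥M) : Perm X) x₀ := by
    intro j
    induction j with
    | zero =>
      have h0 : ((0 : AddMonoid.End (ZMod p × ZMod p))) a₀ = 0 := rfl
      rw [Finset.sum_range_zero, h0, ofAdd_zero, map_one, pow_zero]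
      rfl
    | succ j ih =>
      have step1 : (g ^ (j + 1)) x₀ = (g ^ j) ((m₀ : Perm X) x₀) := by
        rw [pow_succ, Perm.mul_apply, hm₀]
      have step2 : (g ^ j) ((m₀ : Perm X) x₀)
          = (g ^ j * (m₀ : Perm X) * (g ^ j)⁻¹) ((g ^ j) x₀) := by
        simp [Perm.mul_apply]
      rw [step1, step2, hLit j ⟨m₀, hm₀M⟩, ih, ← Perm.mul_apply, ← Subgroup.coe_mul,
        ← map_mul, ← ofAdd_add]
      congr 3
      rw [Finset.sum_range_succ, show ∀ f g : AddMonoid.End (ZMod p × ZMod p), (f + g) a₀ = f a₀ + g a₀ from fun _ _ => rfl, ← ha₀, add_comm]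
  have hfin := htraj p
  rw [hLsum] at hfin
  have hx : (g ^ p) x₀ = x₀ := by
    rw [hfin]
    have hz : ((0 : AddMonoid.End (ZMod p × ZMod p))) a₀ = 0 := rfl
    rw [hz, ofAdd_zero, map_one]
    rfl
  exact regular_free hMtrans hMcard hgpM hx


/-- A subgroup `N` of the symmetric group on `X` is *regular* if it acts simply
transitively on `X`, i.e. it is transitive and `|N| = |X|`. -/
def IsRegularSubgroup {X : Type*} (N : Subgroup (Equiv.Perm X)) : Prop :=
  (∀ x y : X, ∃ n ∈ N, n x = y) ∧ Nat.card ↥N = Nat.card X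

/-- If a transitive subgroup `G` of `Sym(X)`, `|X| = p²` with `p` an odd prime,
normalizes a regular cyclic subgroup of order `p²`, then it normalizes no regular
subgroup isomorphic to `(ℤ/pℤ) × (ℤ/pℤ)`. -/
theorem stmt_0 {p : ℕ} (hp : p.Prime) (hodd : Odd p)
    {X : Type*} [Finite X] (hX : Nat.card X = p ^ 2)
    (G : Subgroup (Equiv.Perm X)) (hG : ∀ x y : X, ∃ g ∈ G, g x = y)
    (hcyc : ∃ N : Subgroup (Equiv.Perm X), IsRegularSubgroup N ∧
      IsCyclic ↥N ∧ Nat.card ↥N = p ^ 2 ∧ G ≤ Subgroup.normalizer (N : Set (Equiv.Perm X))) :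
    ¬ ∃ M : Subgroup (Equiv.Perm X), IsRegularSubgroup M ∧
      Nonempty (↥M ≃* Multiplicative (ZMod p × ZMod p)) ∧ G ≤ Subgroup.normalizer (M : Set (Equiv.Perm X)) := by
  haveI : Fact p.Prime := ⟨hp⟩
  rintro ⟨M, ⟨hMtrans, hMcard⟩, ⟨μ⟩, hGM⟩
  obtain ⟨N, ⟨hNtrans, hNcard'⟩, hNcyc, hNcard, hGN⟩ := hcyc
  -- a base point
  have hpos : 0 < Nat.card X := by rw [hX]; exact pow_pos hp.pos 2
  obtain ⟨x₀⟩ : Nonempty X := (Nat.card_pos_iff.mp hpos).1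
  -- a transitive p-subgroup of G
  obtain ⟨Q, hQG, hQp, hQtrans⟩ := exists_transitive_pSubgroup hX G hG
  -- a generator of N
  obtain ⟨⟨n, hnN⟩, hgen⟩ := hNcyc.exists_generator
  have hord : orderOf n = p ^ 2 := by
    have h1 : orderOf (⟨n, hnN⟩ : ↥N) = Nat.card ↥N :=
      orderOf_eq_card_of_forall_mem_zpowers hgen
    rw [Subgroup.orderOf_mk] at h1
    rw [h1, hNcard]
  have hgen' : ∀ a ∈ N, ∃ j : ℤ, a = n ^ j := by
    intro a ha
    obtain ⟨j, hj⟩ := hgen ⟨a, ha⟩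
    refine ⟨j, ?_⟩
    have := congrArg (Subtype.val) hj
    simpa using this.symm
  -- an element of Q sending x₀ to n x₀
  obtain ⟨u, huQ, hux⟩ := hQtrans x₀ (n x₀)
  obtain ⟨r, hr⟩ := hQp ⟨u, huQ⟩
  have hur : u ^ (p ^ r) = 1 := by
    have := congrArg (Subtype.val) hr
    simpa using this
  have huG : u ∈ G := hQG huQ
  have hMnorm : ∀ a ∈ M, u * a * u⁻¹ ∈ M := fun a ha =>
    (Subgroup.mem_normalizer_iff.mp (hGM huG) a).mp ha
  have hNnorm : ∀ a ∈ N, u * a * u⁻¹ ∈ N := fun a ha =>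
    (Subgroup.mem_normalizer_iff.mp (hGN huG) a).mp ha
  have hup : u ^ p = 1 := lemD hp hodd hMtrans hMcard μ hMnorm hur x₀
  exact lemE hp hodd hNtrans hNcard' hnN hord hgen' hNnorm x₀ hux hup
end

section
/- Let p be an odd prime, X a finite set with |X| = p², and N a regular subgroup of Sym(X) which is cyclic of order p². Then every transitive subgroup of the normalizer of N in Sym(X) contains an element of order p². (Equivalently: every transitive subgroup of the holomorph Hol(C_{p²}), viewed inside S_{p²}, contains an element of order p².) -/
/-- If `x ^ 2 = 0` in a commutative ring then `(1 + x) ^ i = 1 + i * x`. -/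
lemma aux_one_add_pow {R : Type*} [CommRing R] (x : R) (hx : x ^ 2 = 0) (i : ℕ) :
    (1 + x) ^ i = 1 + (i : R) * x := by
  induction i with
  | zero => simp
  | succ j ih =>
    rw [pow_succ, ih]
    push_cast
    ring_nf
    rw [sq] at hx
    linear_combination (j : R) * hx

/-- For odd `p = 2m+1`, `∑_{i<p} (1+kp)^i ≡ p (mod p²)`. -/
lemma aux_sum_modeq {p : ℕ} {m : ℕ} (hm : p = 2 * m + 1) (k : ℕ) :
    (∑ i ∈ Finset.range p, (1 + k * p) ^ i) ≡ p [MOD p ^ 2] := by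
  rw [← ZMod.natCast_eq_natCast_iff]
  push_cast
  have hx : ((k : ZMod (p ^ 2)) * (p : ZMod (p ^ 2))) ^ 2 = 0 := by
    have hp2 : ((p : ZMod (p ^ 2))) ^ 2 = 0 := by
      rw [← Nat.cast_pow]; exact ZMod.natCast_self (p ^ 2)
    rw [mul_pow, hp2, mul_zero]
  calc (∑ i ∈ Finset.range p, ((1 : ZMod (p^2)) + (k:ZMod (p^2)) * (p:ZMod (p^2))) ^ i)
      = ∑ i ∈ Finset.range p, (1 + (i : ZMod (p^2)) * ((k:ZMod (p^2)) * (p:ZMod (p^2)))) := by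
        exact Finset.sum_congr rfl fun i _ => aux_one_add_pow _ hx i
    _ = (p : ZMod (p^2)) := by
        rw [Finset.sum_add_distrib, ← Finset.sum_mul]
        have hsum : (∑ i ∈ Finset.range p, (i : ZMod (p^2))) = ((p * m : ℕ) : ZMod (p^2)) := by
          rw [← Nat.cast_sum]
          congr 1
          have h2 : (∑ i ∈ Finset.range p, i) * 2 = p * m * 2 := by
            rw [Finset.sum_range_id_mul_two, hm, Nat.add_sub_cancel]; ring
          omega
        rw [hsum]
        have hz : ((p * m : ℕ) : ZMod (p^2)) * ((k:ZMod (p^2)) * (p:ZMod (p^2))) = 0 := by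
          push_cast
          have hp2 : ((p : ZMod (p ^ 2))) * (p : ZMod (p ^ 2)) = 0 := by
            have := ZMod.natCast_self (p ^ 2); push_cast at this; rw [← this]; ring
          calc (p : ZMod (p^2)) * m * ((k:ZMod (p^2)) * (p:ZMod (p^2)))
              = ((p:ZMod (p^2)) * p) * (m * k) := by ring
            _ = 0 := by rw [hp2, zero_mul]
        rw [hz, add_zero]
        simp

/-- Let `p` be an odd prime, `|X| = p²`, and `N` a regular subgroup of `Sym(X)`
which is cyclic of order `p²`.  Every transitive subgroup of the normalizer of `N`
in `Sym(X)` (i.e. of the holomorph of `C_{p²}`) contains an element of order `p²`. -/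
theorem stmt_1 {p : ℕ} (hp : p.Prime) (hodd : Odd p)
    {X : Type*} [Finite X] (hX : Nat.card X = p ^ 2)
    (N : Subgroup (Equiv.Perm X)) (hreg : IsRegularSubgroup N)
    (hcyc : IsCyclic ↥N) (hcard : Nat.card ↥N = p ^ 2)
    (H : Subgroup (Equiv.Perm X)) (hHN : H ≤ Subgroup.normalizer (N : Set (Equiv.Perm X)))
    (hHtrans : ∀ x y : X, ∃ h ∈ H, h x = y) :
    ∃ h ∈ H, orderOf h = p ^ 2 := by
  by_contra hcon
  push_neg at hcon
  haveI : Fact p.Prime := ⟨hp⟩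
  have hp1 : 1 < p := hp.one_lt
  -- a point
  have hpos : 0 < Nat.card X := by rw [hX]; positivity
  obtain ⟨x₀⟩ : Nonempty X := (Nat.card_pos_iff.mp hpos).1
  -- generator of N
  obtain ⟨g, hg⟩ := hcyc.exists_generator
  set n : Equiv.Perm X := (g : Equiv.Perm X) with hn
  have hnN : n ∈ N := g.2
  have hordn : orderOf n = p ^ 2 := by
    have h1 : orderOf (N.subtype g) = orderOf g :=
      orderOf_injective N.subtype N.subtype_injective g
    have h2 : orderOf g = p ^ 2 := by
      rw [← hcard]; exact orderOf_eq_card_of_forall_mem_zpowers hg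
    simpa [hn] using h1.trans h2
  -- regularity: trivial point stabilizer in N
  have hbij : Function.Bijective (fun m : ↥N => (m : Equiv.Perm X) x₀) := by
    have hsurj : Function.Surjective (fun m : ↥N => (m : Equiv.Perm X) x₀) := by
      intro y
      obtain ⟨m, hm, hmy⟩ := hreg.1 x₀ y
      exact ⟨⟨m, hm⟩, hmy⟩
    exact (Nat.bijective_iff_surjective_and_card _).mpr ⟨hsurj, hreg.2⟩
  have hfix : ∀ m ∈ N, m x₀ = x₀ → m = 1 := by
    intro m hm hmx
    have : (⟨m, hm⟩ : ↥N) = (1 : ↥N) := hbij.1 (by simpa using hmx)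
    simpa using congrArg (Subtype.val) this
  have hkey0 : ∀ a : ℕ, (n ^ a) x₀ = x₀ → p ^ 2 ∣ a := by
    intro a ha
    have h1 : n ^ a = 1 := hfix _ (pow_mem hnN a) ha
    rw [← hordn]
    exact orderOf_dvd_of_pow_eq_one h1
  have hmemN : ∀ m ∈ N, ∃ a : ℕ, n ^ a = m := by
    intro m hm
    have : (⟨m, hm⟩ : ↥N) ∈ Submonoid.powers g := mem_powers_iff_mem_zpowers.mpr (hg _)
    obtain ⟨a, ha⟩ := (Submonoid.mem_powers_iff _ _).mp this
    exact ⟨a, by simpa using congrArg Subtype.val ha⟩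
  -- the image in `Perm X` of a Sylow p-subgroup of H
  let P : Sylow p ↥H := default
  let Q : Subgroup (Equiv.Perm X) := Subgroup.map H.subtype (P : Subgroup ↥H)
  have hQH : Q ≤ H := by rintro x ⟨y, _, rfl⟩; exact y.2
  have hQp : IsPGroup p ↥Q := P.isPGroup'.map H.subtype
  -- every element of Q has order dividing p
  have hQexp : ∀ σ ∈ Q, σ ^ p = 1 := by
    intro σ hσ
    obtain ⟨c, hc⟩ := hQp ⟨σ, hσ⟩
    have hc' : σ ^ p ^ c = 1 := by simpa using congrArg Subtype.val hc
    obtain ⟨j, hj, hjord⟩ := (Nat.dvd_prime_pow hp).mp (orderOf_dvd_of_pow_eq_one hc')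
    by_cases h2j : 2 ≤ j
    · exfalso
      apply hcon (σ ^ p ^ (j - 2)) (H.pow_mem (hQH hσ) _)
      rw [orderOf_pow, hjord, Nat.gcd_eq_right (pow_dvd_pow p (by omega)),
        Nat.pow_div (by omega) hp.pos]
      congr 1
      omega
    · have : orderOf σ ∣ p := by
        rw [hjord]
        simpa using pow_dvd_pow p (show j ≤ 1 by omega)
      exact orderOf_dvd_iff_pow_eq_one.mp this
  -- H-orbit of x₀ is everything
  have horbH : MulAction.orbit ↥H x₀ = Set.univ := by
    ext y
    simp only [Set.mem_univ, iff_true]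
    obtain ⟨h, hh, hy⟩ := hHtrans x₀ y
    exact ⟨⟨h, hh⟩, hy⟩
  have hcardH : Nat.card ↥H = p ^ 2 * Nat.card (MulAction.stabilizer ↥H x₀) := by
    have hOS := Nat.card_congr (MulAction.orbitProdStabilizerEquivGroup ↥H x₀)
    rw [Nat.card_prod] at hOS
    rw [← hOS, horbH]
    congr 1
    rw [Nat.card_congr (Equiv.Set.univ X), hX]
  have hstabH_pos : Nat.card (MulAction.stabilizer ↥H x₀) ≠ 0 := Nat.card_pos.ne'
  have hfact : (Nat.card ↥H).factorization p
      = 2 + (Nat.card (MulAction.stabilizer ↥H x₀)).factorization p := by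
    rw [hcardH, Nat.factorization_mul (by positivity) hstabH_pos]
    simp [hp.factorization_pow]
  have hcardQ : Nat.card ↥Q = p ^ ((Nat.card ↥H).factorization p) := by
    rw [← Sylow.card_eq_multiplicity P]
    exact (Nat.card_congr
      (Subgroup.equivMapOfInjective _ H.subtype H.subtype_injective).toEquiv).symm
  -- the stabilizer of x₀ in Q is a p-group inside the stabilizer in H
  have hstabQ : Nat.card (MulAction.stabilizer ↥Q x₀)
      ∣ p ^ ((Nat.card (MulAction.stabilizer ↥H x₀)).factorization p) := by
    obtain ⟨t, ht⟩ := IsPGroup.iff_card.mp (hQp.to_subgroup (MulAction.stabilizer ↥Q x₀))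
    have hdvd : Nat.card (MulAction.stabilizer ↥Q x₀)
        ∣ Nat.card (MulAction.stabilizer ↥H x₀) := by
      refine Subgroup.card_dvd_of_injective
        ({ toFun := fun σ => ⟨⟨((σ : ↥Q) : Equiv.Perm X), hQH (σ : ↥Q).2⟩, σ.2⟩,
           map_one' := rfl,
           map_mul' := fun a b => rfl } :
          MulAction.stabilizer ↥Q x₀ →* MulAction.stabilizer ↥H x₀) ?_
      intro a b hab
      have h1 : ((a : ↥Q) : Equiv.Perm X) = ((b : ↥Q) : Equiv.Perm X) :=
        congrArg (fun z : MulAction.stabilizer ↥H x₀ => ((z : ↥H) : Equiv.Perm X)) hab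
      exact Subtype.ext (Subtype.ext h1)
    rw [ht] at hdvd ⊢
    exact pow_dvd_pow p ((hp.pow_dvd_iff_le_factorization hstabH_pos).mp hdvd)
  -- the Q-orbit of x₀ is everything
  have horbQcard : p ^ 2 ≤ Nat.card ↥(MulAction.orbit ↥Q x₀) := by
    have hOS := Nat.card_congr (MulAction.orbitProdStabilizerEquivGroup ↥Q x₀)
    rw [Nat.card_prod, hcardQ, hfact] at hOS
    obtain ⟨t, ht⟩ := hstabQ
    have hstabQpos : 0 < Nat.card (MulAction.stabilizer ↥Q x₀) := Nat.card_pos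
    have ht0 : t ≠ 0 := by
      rintro rfl
      rw [mul_zero] at ht
      exact absurd ht (pow_ne_zero _ hp.ne_zero)
    have horbeq : Nat.card ↥(MulAction.orbit ↥Q x₀) = p ^ 2 * t := by
      have h2 : Nat.card ↥(MulAction.orbit ↥Q x₀) * Nat.card (MulAction.stabilizer ↥Q x₀)
          = (p ^ 2 * t) * Nat.card (MulAction.stabilizer ↥Q x₀) := by
        rw [hOS, pow_add, ht]; ring
      exact Nat.eq_of_mul_eq_mul_right hstabQpos h2
    rw [horbeq]
    calc p ^ 2 = p ^ 2 * 1 := by ring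
      _ ≤ p ^ 2 * t := Nat.mul_le_mul_left _ (Nat.one_le_iff_ne_zero.mpr ht0)
  have horbQ : MulAction.orbit ↥Q x₀ = Set.univ := by
    apply Set.eq_of_subset_of_ncard_le (Set.subset_univ _)
    rw [← Nat.card_coe_set_eq, ← Nat.card_coe_set_eq,
      Nat.card_congr (Equiv.Set.univ X), hX]
    exact horbQcard
  -- pick σ ∈ Q with σ x₀ = n x₀
  have hmemorb : n x₀ ∈ MulAction.orbit ↥Q x₀ := by rw [horbQ]; trivial
  obtain ⟨σQ, hσx⟩ := hmemorb
  set σ : Equiv.Perm X := (σQ : Equiv.Perm X) with hσdef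
  have hσQ : σ ∈ Q := σQ.2
  have hσp : σ ^ p = 1 := hQexp σ hσQ
  have hσnorm : σ ∈ Subgroup.normalizer (N : Set (Equiv.Perm X)) := hHN (hQH hσQ)
  have hσx₀ : σ x₀ = n x₀ := hσx
  -- conjugation exponent
  obtain ⟨s, hs⟩ := hmemN (σ * n * σ⁻¹) ((Subgroup.mem_normalizer_iff.mp hσnorm n).mp hnN)
  have hconj : ∀ j : ℕ, σ ^ j * n = n ^ (s ^ j) * σ ^ j := by
    intro j
    induction j with
    | zero => simp
    | succ i ih =>
      calc σ ^ (i + 1) * n = σ * (σ ^ i * n) := by rw [pow_succ']; group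
        _ = σ * (n ^ s ^ i * σ ^ i) := by rw [ih]
        _ = (σ * n ^ s ^ i * σ⁻¹) * σ ^ (i + 1) := by group
        _ = (σ * n * σ⁻¹) ^ s ^ i * σ ^ (i + 1) := by rw [conj_pow]
        _ = n ^ s ^ (i + 1) * σ ^ (i + 1) := by
            rw [← hs, ← pow_mul, ← pow_succ']
  -- s ≡ 1 mod p
  have hsp2 : s ^ p ≡ 1 [MOD p ^ 2] := by
    have h1 : σ ^ p * n = n ^ s ^ p * σ ^ p := hconj p
    rw [hσp, one_mul, mul_one] at h1
    have h2 : n ^ (s ^ p) = n ^ 1 := by rw [pow_one, ← h1]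
    have := pow_eq_pow_iff_modEq.mp h2
    rwa [hordn] at this
  have hsp1 : ((s : ZMod p)) = 1 := by
    have h2 : s ^ p ≡ 1 [MOD p] := hsp2.of_dvd (dvd_pow_self p two_ne_zero)
    have h3 : ((s : ZMod p)) ^ p = 1 := by
      have h4 := (ZMod.natCast_eq_natCast_iff _ _ _).mpr h2
      push_cast at h4
      exact h4
    rwa [ZMod.pow_card] at h3
  have hs1le : 1 ≤ s := by
    rcases Nat.eq_zero_or_pos s with h | h
    · rw [h] at hsp1
      push_cast at hsp1
      exact absurd hsp1 zero_ne_one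
    · exact h
  have hdvd1 : p ∣ s - 1 := by
    have h5 : s ≡ 1 [MOD p] := (ZMod.natCast_eq_natCast_iff s 1 p).mp (by push_cast; exact hsp1)
    exact (Nat.modEq_iff_dvd' hs1le).mp h5.symm
  obtain ⟨k, hk⟩ := hdvd1
  have hsk : s = 1 + k * p := by
    have h6 : s - 1 + 1 = s := Nat.sub_add_cancel hs1le
    rw [hk] at h6
    rw [← h6]; ring
  -- iterate the action
  have hact : ∀ j : ℕ, (σ ^ j) x₀ = (n ^ (∑ i ∈ Finset.range j, s ^ i)) x₀ := by
    intro j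
    induction j with
    | zero => simp
    | succ i ih =>
      have e1 : (σ ^ (i + 1)) x₀ = (σ ^ i) (σ x₀) := by
        rw [pow_succ, Equiv.Perm.mul_apply]
      rw [e1, hσx₀]
      have e2 : (σ ^ i) (n x₀) = (σ ^ i * n) x₀ := rfl
      rw [e2, hconj i, Equiv.Perm.mul_apply, ih]
      have e3 : (n ^ s ^ i) ((n ^ (∑ i' ∈ Finset.range i, s ^ i')) x₀)
          = ((n ^ s ^ i) * (n ^ (∑ i' ∈ Finset.range i, s ^ i'))) x₀ := rfl
      rw [e3, ← pow_add, Finset.sum_range_succ, Nat.add_comm]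
  -- conclude
  have hTfix : (n ^ (∑ i ∈ Finset.range p, s ^ i)) x₀ = x₀ := by
    have h6 := hact p
    rw [hσp] at h6
    simpa using h6.symm
  have hTdvd : p ^ 2 ∣ ∑ i ∈ Finset.range p, s ^ i := hkey0 _ hTfix
  obtain ⟨m, hm⟩ := hodd
  have hT : (∑ i ∈ Finset.range p, s ^ i) ≡ p [MOD p ^ 2] := by
    rw [hsk]; exact aux_sum_modeq hm k
  have hfinal : p ^ 2 ∣ p := by
    have h0 : (∑ i ∈ Finset.range p, s ^ i) ≡ 0 [MOD p ^ 2] :=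
      (Nat.modEq_zero_iff_dvd).mpr hTdvd
    have h7 : p ≡ 0 [MOD p ^ 2] := hT.symm.trans h0
    exact (Nat.modEq_zero_iff_dvd).mp h7
  have hle : p ^ 2 ≤ p := Nat.le_of_dvd hp.pos hfinal
  nlinarith
end

section
/- Let p be an odd prime. The normalizer in Sym((ℤ/pℤ) × (ℤ/pℤ)) of the image of the left regular representation of (ℤ/pℤ) × (ℤ/pℤ) (i.e., the holomorph Hol(C_p × C_p), viewed inside S_{p²}) contains no element of order p². -/
open Finset Multiplicative

set_option maxHeartbeats 2000000 in
/-- (Kohl) For `p` an odd prime, the holomorph of `C_p × C_p` — the normalizer in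
`Sym((ℤ/pℤ) × (ℤ/pℤ))` of the image of the left regular representation of
`(ℤ/pℤ) × (ℤ/pℤ)` — contains no element of order `p²`. -/
theorem stmt_8 {p : ℕ} (hp : p.Prime) (hodd : Odd p) :
    ∀ σ ∈ Subgroup.normalizer
      ((MulAction.toPermHom (Multiplicative (ZMod p × ZMod p))
        (Multiplicative (ZMod p × ZMod p))).range : Set (Equiv.Perm (Multiplicative (ZMod p × ZMod p)))),
      orderOf σ ≠ p ^ 2 := by
  haveI : Fact p.Prime := ⟨hp⟩
  set A := ZMod p × ZMod p with hA
  set G := Multiplicative A with hG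
  intro σ hσ hord
  set a : G := σ 1 with ha
  set φ : G → G := fun g => σ g * a⁻¹ with hφ
  -- key conjugation identity
  have key : ∀ g y : G, σ (g * y) = φ g * σ y := by
    intro g y
    rw [Subgroup.mem_normalizer_iff] at hσ
    obtain ⟨c, hc⟩ := (hσ ((MulAction.toPermHom G G) g)).1 ⟨g, rfl⟩
    have happ : ∀ x : G, c * σ x = σ (g * x) := by
      intro x
      have := congrArg (fun π : Equiv.Perm G => π (σ x)) hc
      simpa [MulAction.toPermHom_apply, Equiv.Perm.mul_apply, smul_eq_mul] using this
    have hc1 := happ 1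
    have : c = φ g := by
      rw [mul_one] at hc1
      show c = σ g * a⁻¹
      exact eq_mul_inv_of_mul_eq hc1
    rw [← this, happ]
  have φone : φ 1 = 1 := by simp [hφ, ha]
  have σ_eq : ∀ x : G, σ x = φ x * a := by
    intro x; exact (inv_mul_cancel_right (σ x) a).symm
  have φmul : ∀ g h : G, φ (g * h) = φ g * φ h := by
    intro g h
    have h2 : φ (g * h) * a = (φ g * φ h) * a := by
      rw [← σ_eq, key, σ_eq h]
      exact (mul_assoc _ _ _).symm
    exact mul_right_cancel h2
  -- the monoid hom version (for map_prod)
  set Φm : G →* G := MonoidHom.mk' φ φmul with hΦm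
  -- additive endomorphism
  set f : A →+ A := AddMonoidHom.mk' (fun v => toAdd (φ (ofAdd v)))
    (fun v w => by
      show toAdd (φ (ofAdd v * ofAdd w)) = _
      rw [φmul]; rfl) with hf
  set Φ : Module.End (ZMod p) A := f.toZModLinearMap p with hΦ
  have φ_apply : ∀ x : G, φ x = ofAdd (Φ (toAdd x)) := fun x => rfl
  have iter : ∀ (k : ℕ) (x : G), φ^[k] x = ofAdd ((Φ ^ k) (toAdd x)) := by
    intro k
    induction k with
    | zero => intro x; simp
    | succ k ih =>
      intro x
      rw [Function.iterate_succ_apply', ih, φ_apply]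
      simp only [toAdd_ofAdd]
      rw [← Module.End.mul_apply, ← pow_succ']
  have φ_iter_one : ∀ k : ℕ, φ^[k] (1 : G) = 1 := by
    intro k; rw [iter]; simp
  -- power formula
  have σpow : ∀ (m : ℕ) (x : G), (σ ^ m) x = φ^[m] x * ∏ k ∈ Finset.range m, φ^[k] a := by
    intro m
    induction m with
    | zero => intro x; simp
    | succ m ih =>
      intro x
      rw [pow_succ', Equiv.Perm.mul_apply, ih, σ_eq]
      have hmap : φ (φ^[m] x * ∏ k ∈ Finset.range m, φ^[k] a)
          = φ (φ^[m] x) * ∏ k ∈ Finset.range m, φ (φ^[k] a) := by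
        rw [show φ (φ^[m] x * ∏ k ∈ Finset.range m, φ^[k] a)
            = Φm (φ^[m] x * ∏ k ∈ Finset.range m, φ^[k] a) from rfl]
        rw [map_mul, map_prod]
        rfl
      rw [hmap, ← Function.iterate_succ_apply' φ m x]
      have hprod : ∏ k ∈ Finset.range m, φ (φ^[k] a) = ∏ k ∈ Finset.range m, φ^[k+1] a := by
        refine Finset.prod_congr rfl fun k _ => ?_
        rw [← Function.iterate_succ_apply' φ k a]
      rw [hprod, Finset.prod_range_succ', Function.iterate_zero_apply, mul_assoc]
  -- from order p^2
  have hpow2 : σ ^ (p ^ 2) = 1 := by rw [← hord]; exact pow_orderOf_eq_one σ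
  have hC : ∀ x : G, φ^[p ^ 2] x * ∏ k ∈ Finset.range (p ^ 2), φ^[k] a = x := by
    intro x
    rw [← σpow, hpow2, Equiv.Perm.one_apply]
  have hC1 : (∏ k ∈ Finset.range (p ^ 2), φ^[k] a) = 1 := by
    have := hC 1
    rwa [φ_iter_one, one_mul] at this
  have hφfix : ∀ x : G, φ^[p ^ 2] x = x := by
    intro x
    have := hC x
    rwa [hC1, mul_one] at this
  have hΦpow2 : Φ ^ (p ^ 2) = 1 := by
    apply LinearMap.ext; intro v
    have := hφfix (ofAdd v)
    rw [iter] at this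
    simpa using congrArg toAdd this
  -- char p of the endomorphism ring
  haveI : Nontrivial A := by
    haveI : Nontrivial (ZMod p) := ZMod.nontrivial p
    infer_instance
  haveI hcharE : CharP (Module.End (ZMod p) A) p :=
    charP_of_injective_algebraMap' (ZMod p) (A := Module.End (ZMod p) A) p
  -- nilpotency
  set n : Module.End (ZMod p) A := Φ - 1 with hn
  have hnil : n ^ (p ^ 2) = 0 := by
    rw [hn, sub_pow_char_pow_of_commute p 2 (Commute.one_right Φ), hΦpow2, one_pow, sub_self]
  have hfr : Module.finrank (ZMod p) A = 2 := by
    show Module.finrank (ZMod p) (ZMod p × ZMod p) = 2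
    rw [Module.finrank_prod, Module.finrank_self]
  have hn2 : n ^ 2 = 0 := by
    have hcp : n.charpoly = Polynomial.X ^ Module.finrank (ZMod p) A :=
      IsNilpotent.charpoly_eq_X_pow_finrank ⟨p ^ 2, hnil⟩
    have := n.aeval_self_charpoly
    rw [hcp, hfr] at this
    simpa [map_pow, Polynomial.aeval_X] using this
  have hnn : n * n = 0 := by rw [← sq]; exact hn2
  have hΦeq : (1 : Module.End (ZMod p) A) + n = Φ := by rw [hn]; abel
  have hbin : ∀ k : ℕ, Φ ^ k = 1 + (k : Module.End (ZMod p) A) * n := by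
    intro k
    induction k with
    | zero => simp
    | succ k ih =>
      rw [pow_succ, ih, ← hΦeq]
      push_cast
      have : (1 + (k : Module.End (ZMod p) A) * n) * (1 + n)
          = 1 + ((k : Module.End (ZMod p) A) + 1) * n
            + (k : Module.End (ZMod p) A) * (n * n) := by noncomm_ring
      rw [this, hnn]
      noncomm_ring
  have hpE : ((p : ℕ) : Module.End (ZMod p) A) = 0 := CharP.cast_eq_zero _ p
  have hΦp : Φ ^ p = 1 := by rw [hbin p, hpE, zero_mul, add_zero]
  -- the sum vanishes
  have hsum : (∑ k ∈ Finset.range p, Φ ^ k) = 0 := by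
    have h1 : (∑ k ∈ Finset.range p, Φ ^ k)
        = ∑ k ∈ Finset.range p, (1 + (k : Module.End (ZMod p) A) * n) := by
      exact Finset.sum_congr rfl fun k _ => hbin k
    rw [h1, Finset.sum_add_distrib, Finset.sum_const, Finset.card_range]
    have h2 : (∑ k ∈ Finset.range p, (k : Module.End (ZMod p) A) * n)
        = ((∑ k ∈ Finset.range p, k : ℕ) : Module.End (ZMod p) A) * n := by
      rw [← Finset.sum_mul]; push_cast; rfl
    have h3 : p ∣ ∑ k ∈ Finset.range p, k := by
      have hg : (∑ k ∈ Finset.range p, k) * 2 = p * (p - 1) := Finset.sum_range_id_mul_two p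
      have hdvd : p ∣ (∑ k ∈ Finset.range p, k) * 2 := hg ▸ Dvd.intro _ rfl
      rcases (Nat.Prime.dvd_mul hp).1 hdvd with h | h
      · exact h
      · have hp2 : p = 2 := (Nat.prime_dvd_prime_iff_eq hp Nat.prime_two).mp h
        rw [hp2] at hodd
        exact absurd hodd (by decide)
    obtain ⟨t, ht⟩ := h3
    rw [h2, ht]
    push_cast
    rw [hpE, zero_mul, zero_mul, add_zero]
    simp [nsmul_eq_mul, hpE]
  -- conclude σ ^ p = 1
  have hσp : σ ^ p = 1 := by
    refine Equiv.ext fun x => ?_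
    rw [σpow p x, Equiv.Perm.one_apply]
    have h1 : φ^[p] x = x := by
      rw [iter, hΦp]; simp
    have h2 : (∏ k ∈ Finset.range p, φ^[k] a) = 1 := by
      have : toAdd (∏ k ∈ Finset.range p, φ^[k] a)
          = ∑ k ∈ Finset.range p, (Φ ^ k) (toAdd a) := by
        rw [toAdd_prod]
        exact Finset.sum_congr rfl fun k _ => by rw [iter]; simp
      have hz : toAdd (∏ k ∈ Finset.range p, φ^[k] a) = 0 := by
        rw [this, ← LinearMap.sum_apply, hsum, LinearMap.zero_apply]
      have := congrArg ofAdd hz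
      simpa using this
    rw [h1, h2, mul_one]
  -- contradiction
  have hdvd : orderOf σ ∣ p := orderOf_dvd_of_pow_eq_one hσp
  rw [hord] at hdvd
  have hle := Nat.le_of_dvd hp.pos hdvd
  have := hp.two_le
  nlinarith
end

section
/- Let p be a prime and G a transitive subgroup of Sym(X) for a set X with |X| = p. Then there exists a regular subgroup of Sym(X) normalized by G if and only if G is solvable; moreover, when G is solvable, such a regular subgroup is unique (it is cyclic of order p). (Group-theoretic form, via the Greither–Pareigis correspondence, of: a separable field extension of prime degree p has a Hopf Galois structure if and only if the Galois group of its Galois closure is solvable, and in this case the Hopf Galois structure is unique.) -/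
open Subgroup Equiv MulAction
open scoped commutatorElement

namespace Stmt11Aux

variable {p : ℕ} {X : Type*}


lemma mulAut_mul_comm {C : Type*} [Group C] [IsCyclic C] (σ τ : MulAut C) : σ * τ = τ * σ := by
  obtain ⟨g, hg⟩ := IsCyclic.exists_generator (α := C)
  obtain ⟨a, ha⟩ := Subgroup.mem_zpowers_iff.mp (hg (σ g))
  obtain ⟨b, hb⟩ := Subgroup.mem_zpowers_iff.mp (hg (τ g))
  ext x
  obtain ⟨k, hk⟩ := Subgroup.mem_zpowers_iff.mp (hg x)
  subst hk
  have h1 : ∀ (σ' τ' : MulAut C) (a' b' : ℤ), g ^ a' = σ' g → g ^ b' = τ' g →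
      σ' (τ' (g ^ k)) = g ^ (a' * (b' * k)) := by
    intro σ' τ' a' b' ha' hb'
    calc σ' (τ' (g ^ k)) = σ' ((τ' g) ^ k) := by rw [map_zpow]
      _ = σ' ((g ^ b') ^ k) := by rw [hb']
      _ = σ' (g ^ (b' * k)) := by rw [← zpow_mul]
      _ = (σ' g) ^ (b' * k) := by rw [map_zpow]
      _ = (g ^ a') ^ (b' * k) := by rw [ha']
      _ = g ^ (a' * (b' * k)) := by rw [← zpow_mul]
  show σ (τ (g ^ k)) = τ (σ (g ^ k))
  rw [h1 σ τ a b ha hb, h1 τ σ b a hb ha]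
  ring_nf

lemma comm_of_card_prime (hp : p.Prime) (N : Subgroup (Perm X)) (hcard : Nat.card ↥N = p) :
    ∀ a ∈ N, ∀ b ∈ N, a * b = b * a := by
  haveI : Fact p.Prime := ⟨hp⟩
  haveI := isCyclic_of_prime_card hcard
  letI := IsCyclic.commGroup (α := ↥N)
  intro a ha b hb
  exact congrArg Subtype.val (mul_comm (⟨a, ha⟩ : ↥N) ⟨b, hb⟩)

lemma card_eq_of_comm [Finite X] [Nonempty X] (N : Subgroup (Perm X))
    (hcomm : ∀ a ∈ N, ∀ b ∈ N, a * b = b * a)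
    (ht : ∀ x y : X, ∃ n ∈ N, n x = y) : Nat.card ↥N = Nat.card X := by
  obtain ⟨x₀⟩ := ‹Nonempty X›
  apply Nat.card_eq_of_bijective (fun n : ↥N => (n : Perm X) x₀)
  constructor
  · rintro ⟨a, ha⟩ ⟨b, hb⟩ h
    simp only at h
    ext y : 2
    obtain ⟨c, hc, rfl⟩ := ht x₀ y
    calc a (c x₀) = (a * c) x₀ := rfl
      _ = (c * a) x₀ := by rw [hcomm a ha c hc]
      _ = c (a x₀) := rfl
      _ = c (b x₀) := by rw [h]
      _ = (c * b) x₀ := rfl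
      _ = (b * c) x₀ := by rw [hcomm b hb c hc]
      _ = b (c x₀) := rfl
  · intro y
    obtain ⟨n, hn, h⟩ := ht x₀ y
    exact ⟨⟨n, hn⟩, h⟩

lemma centralizer_eq [Nonempty X] (N : Subgroup (Perm X))
    (hcomm : ∀ a ∈ N, ∀ b ∈ N, a * b = b * a)
    (ht : ∀ x y : X, ∃ n ∈ N, n x = y) :
    Subgroup.centralizer (N : Set (Perm X)) = N := by
  obtain ⟨x₀⟩ := ‹Nonempty X›
  apply le_antisymm
  · intro c hc
    rw [Subgroup.mem_centralizer_iff] at hc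
    obtain ⟨n, hn, hnx⟩ := ht x₀ (c x₀)
    have : c = n := by
      ext y
      obtain ⟨m, hm, rfl⟩ := ht x₀ y
      calc c (m x₀) = (c * m) x₀ := rfl
        _ = (m * c) x₀ := by rw [← hc m hm]
        _ = m (c x₀) := rfl
        _ = m (n x₀) := by rw [hnx]
        _ = (m * n) x₀ := rfl
        _ = (n * m) x₀ := by rw [hcomm m hm n hn]
        _ = n (m x₀) := rfl
    rwa [this]
  · intro n hn
    rw [Subgroup.mem_centralizer_iff]
    intro m hm
    exact hcomm m hm n hn

lemma not_p_sq_dvd (hp : p.Prime) [Finite X] (hX : Nat.card X = p) :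
    ¬ p ^ 2 ∣ Nat.card (Perm X) := by
  intro h
  have hcard : Nat.card (Perm X) = (Nat.factorial p) := by
    haveI := Fintype.ofFinite X
    haveI : DecidableEq X := Classical.decEq X
    rw [Nat.card_eq_fintype_card, Fintype.card_perm, ← Nat.card_eq_fintype_card, hX]
  rw [hcard] at h
  have h3 : (Nat.factorial p) = p * Nat.factorial (p-1) := by
    obtain ⟨q, rfl⟩ := Nat.exists_eq_succ_of_ne_zero hp.pos.ne'
    simp [Nat.factorial_succ]
  rw [h3, pow_two] at h
  have h4 : p ∣ Nat.factorial (p-1) := (Nat.mul_dvd_mul_iff_left hp.pos).mp h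
  have h5 : p ≤ p - 1 := (Nat.Prime.dvd_factorial hp).mp h4
  have := hp.pos
  omega


lemma mem_regular_of_orderOf_eq (hp : p.Prime) [Finite X] (hX : Nat.card X = p)
    (N : Subgroup (Perm X)) (hN : Nat.card ↥N = p)
    (g : Perm X) (hg : orderOf g = p) (hmem : g ∈ Subgroup.normalizer (N : Set (Perm X))) : g ∈ N := by
  haveI : Fact p.Prime := ⟨hp⟩
  set H := Subgroup.normalizer (N : Set (Perm X)) with hH
  set N' : Subgroup ↥H := N.subgroupOf H with hN'def
  have hcardN' : Nat.card ↥N' = p := by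
    rw [← hN]
    exact Nat.card_congr (subgroupOfEquivOfLe le_normalizer).toEquiv
  have hNpg : IsPGroup p ↥N' := IsPGroup.of_card (by rw [hcardN', pow_one])
  have hmax : ∀ {Q : Subgroup ↥H}, IsPGroup p ↥Q → N' ≤ Q → Q = N' := by
    intro Q hQ hle
    obtain ⟨n, hn⟩ := IsPGroup.iff_card.mp hQ
    have h1 : p ∣ Nat.card Q := hcardN' ▸ Subgroup.card_dvd_of_le hle
    have h2 : ¬ p ^ 2 ∣ Nat.card Q := by
      intro hc
      exact not_p_sq_dvd hp hX (hc.trans ((Subgroup.card_subgroup_dvd_card Q).trans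
        (Subgroup.card_subgroup_dvd_card H)))
    have hn1 : n = 1 := by
      rcases n with _ | _ | n
      · rw [hn, pow_zero] at h1; exact absurd (Nat.le_of_dvd one_pos h1) (by have := hp.one_lt; omega)
      · rfl
      · exact absurd (hn ▸ pow_dvd_pow p (by omega : 2 ≤ n + 2)) h2
    have hcardQ : Nat.card Q = p := by rw [hn, hn1, pow_one]
    exact (Subgroup.eq_of_le_of_card_ge hle (le_of_eq (hcardQ.trans hcardN'.symm))).symm
  haveI : N'.Normal := Subgroup.normal_in_normalizer
  let S : Sylow p ↥H := ⟨N', hNpg, fun hQ hle => hmax hQ hle⟩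
  haveI : Subsingleton (Sylow p ↥H) :=
    (Sylow.unique_of_normal S (by exact this)).instSubsingleton
  set g' : ↥H := ⟨g, hmem⟩ with hg'
  have hog : orderOf g' = p := by
    rw [← hg]
    exact (orderOf_injective H.subtype H.subtype_injective g').symm
  have hpg' : IsPGroup p ↥(zpowers g') :=
    IsPGroup.of_card (by rw [Nat.card_zpowers, hog, pow_one])
  obtain ⟨S₂, hle⟩ := hpg'.exists_le_sylow
  have hS₂ : S₂ = S := Subsingleton.elim _ _
  have : g' ∈ N' := by
    have := hle (Subgroup.mem_zpowers g')
    rw [hS₂] at this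
    exact this
  exact (Subgroup.mem_subgroupOf).mp this


lemma exists_orderOf_eq (hp : p.Prime) [Finite X] (hX : Nat.card X = p)
    (G : Subgroup (Perm X)) (hG : ∀ x y : X, ∃ g ∈ G, g x = y) :
    ∃ g ∈ G, orderOf g = p := by
  haveI : Fact p.Prime := ⟨hp⟩
  haveI : Nonempty X := Nat.card_pos_iff.mp (by rw [hX]; exact hp.pos) |>.1
  obtain ⟨x₀⟩ := ‹Nonempty X›
  haveI : IsPretransitive ↥G X := by
    constructor
    intro x y
    obtain ⟨g, hg, h⟩ := hG x y
    exact ⟨⟨g, hg⟩, h⟩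
  have hdvd : p ∣ Nat.card ↥G := by
    have h1 : (stabilizer ↥G x₀).index = Nat.card X := index_stabilizer_of_transitive ↥G x₀
    have h2 : (stabilizer ↥G x₀).index ∣ Nat.card ↥G := Subgroup.index_dvd_card _
    rwa [h1, hX] at h2
  haveI := Fintype.ofFinite ↥G
  obtain ⟨x, hx⟩ := exists_prime_orderOf_dvd_card (G := ↥G) p (by rwa [← Nat.card_eq_fintype_card])
  exact ⟨↑x, x.2, by rw [← hx]; exact orderOf_injective G.subtype G.subtype_injective x⟩

lemma regular_eq_zpowers (hp : p.Prime) [Finite X] (hX : Nat.card X = p)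
    {N : Subgroup (Perm X)} (hN : Nat.card ↥N = p)
    {g : Perm X} (hg : orderOf g = p) (hmem : g ∈ N) : N = zpowers g := by
  refine (Subgroup.eq_of_le_of_card_ge ((zpowers_le (G := Perm X)).mpr hmem) ?_).symm
  rw [hN, Nat.card_zpowers, hg]

lemma regular_unique (hp : p.Prime) [Finite X] (hX : Nat.card X = p)
    (G : Subgroup (Perm X)) (hG : ∀ x y : X, ∃ g ∈ G, g x = y)
    (N₁ N₂ : Subgroup (Perm X))
    (h₁ : IsRegularSubgroup N₁) (hn₁ : G ≤ Subgroup.normalizer (N₁ : Set (Perm X)))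
    (h₂ : IsRegularSubgroup N₂) (hn₂ : G ≤ Subgroup.normalizer (N₂ : Set (Perm X))) : N₁ = N₂ := by
  obtain ⟨g, hgG, hg⟩ := exists_orderOf_eq hp hX G hG
  have m₁ := mem_regular_of_orderOf_eq hp hX N₁ (h₁.2.trans hX) g hg (hn₁ hgG)
  have m₂ := mem_regular_of_orderOf_eq hp hX N₂ (h₂.2.trans hX) g hg (hn₂ hgG)
  rw [regular_eq_zpowers hp hX (h₁.2.trans hX) hg m₁,
    regular_eq_zpowers hp hX (h₂.2.trans hX) hg m₂]


lemma normalizer_solvable (hp : p.Prime) [Finite X] (hX : Nat.card X = p)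
    (N : Subgroup (Perm X)) (ht : ∀ x y : X, ∃ n ∈ N, n x = y)
    (hcard : Nat.card ↥N = p) : IsSolvable ↥(Subgroup.normalizer (N : Set (Perm X))) := by
  haveI : Fact p.Prime := ⟨hp⟩
  haveI : Nonempty X := Nat.card_pos_iff.mp (by rw [hX]; exact hp.pos) |>.1
  have hcomm := comm_of_card_prime hp N hcard
  have hcent := centralizer_eq N hcomm ht
  haveI : IsCyclic ↥N := isCyclic_of_prime_card hcard
  set H := Subgroup.normalizer (N : Set (Perm X)) with hH
  set N' : Subgroup ↥H := N.subgroupOf H with hN'def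
  haveI hnorm : N'.Normal := Subgroup.normal_in_normalizer
  haveI : IsCyclic ↥N' := isCyclic_of_surjective _ (subgroupOfEquivOfLe le_normalizer).symm.surjective
  haveI : Group.IsSolvable ↥N' := by
    letI := IsCyclic.commGroup (α := ↥N')
    exact isSolvable_of_comm fun a b => mul_comm a b
  haveI : Group.IsSolvable (MulAut ↥N') := isSolvable_of_comm mulAut_mul_comm
  let f : ↥H →* MulAut ↥N' := MulAut.conjNormal
  have hker : f.ker ≤ N' := by
    intro x hx
    have hc : (x : Perm X) ∈ Subgroup.centralizer (N : Set (Perm X)) := by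
      rw [Subgroup.mem_centralizer_iff]
      intro n hn
      have hnH : n ∈ H := le_normalizer hn
      have hn' : (⟨n, hnH⟩ : ↥H) ∈ N' := by rwa [hN'def, mem_subgroupOf]
      have h1 : MulAut.conjNormal (x : ↥H) (⟨⟨n, hnH⟩, hn'⟩ : ↥N') = ⟨⟨n, hnH⟩, hn'⟩ := by
        have hx1 : f x = 1 := (MonoidHom.mem_ker (f := f)).mp hx
        rw [show MulAut.conjNormal (x : ↥H) = f x from rfl, hx1]
        rfl
      have h2 : (x : ↥H) * ⟨n, hnH⟩ * (x : ↥H)⁻¹ = ⟨n, hnH⟩ := by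
        have := congrArg Subtype.val h1
        rwa [MulAut.conjNormal_apply] at this
      have h3 : (x : Perm X) * n * (x : Perm X)⁻¹ = n := congrArg Subtype.val h2
      calc n * ↑x = (↑x * n * (↑x)⁻¹) * ↑x := by rw [h3]
        _ = ↑x * n := by group
    rw [hcent] at hc
    rwa [hN'def, mem_subgroupOf]
  exact solvable_of_ker_le_range N'.subtype f (by rwa [Subgroup.range_subtype])


lemma transitive_of_normalized (hp : p.Prime) [Finite X] (hX : Nat.card X = p)
    (G M : Subgroup (Perm X)) (hG : ∀ x y : X, ∃ g ∈ G, g x = y) (hMG : M ≤ G)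
    (hconj : ∀ g ∈ G, ∀ m ∈ M, g * m * g⁻¹ ∈ M) (hM : M ≠ ⊥) :
    ∀ x y : X, ∃ m ∈ M, m x = y := by
  classical
  haveI : Nonempty X := Nat.card_pos_iff.mp (by rw [hX]; exact hp.pos) |>.1
  haveI : IsPretransitive ↥G X := by
    constructor
    intro x y
    obtain ⟨g, hg, h⟩ := hG x y
    exact ⟨⟨g, hg⟩, h⟩
  set M' : Subgroup ↥G := M.subgroupOf G with hM'def
  haveI : M'.Normal := by
    constructor
    rintro ⟨m, hmG⟩ hm ⟨g, hgG⟩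
    rw [hM'def, mem_subgroupOf] at hm ⊢
    exact hconj g hgG m hm
  -- membership in M'-orbits
  have horb : ∀ x y : X, y ∈ orbit ↥M' x ↔ ∃ m ∈ M, m x = y := by
    intro x y
    constructor
    · rintro ⟨⟨⟨m, hmG⟩, hm⟩, rfl⟩
      exact ⟨m, (mem_subgroupOf).mp hm, rfl⟩
    · rintro ⟨m, hm, rfl⟩
      exact ⟨⟨⟨m, hMG hm⟩, (mem_subgroupOf).mpr hm⟩, rfl⟩
  -- find a point moved by M
  obtain ⟨σ, hσM, hσ1⟩ : ∃ σ ∈ M, σ ≠ 1 := by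
    by_contra h
    push_neg at h
    exact hM (Subgroup.eq_bot_iff_forall M |>.mpr h)
  obtain ⟨a, ha⟩ : ∃ a : X, σ a ≠ a := by
    by_contra h
    push_neg at h
    exact hσ1 (Equiv.ext h)
  -- the orbit of a is a block
  have hblock : IsBlock ↥G (orbit ↥M' a) := IsBlock.orbit_of_normal a
  have hne : (orbit ↥M' a).Nonempty := ⟨a, mem_orbit_self a⟩
  have hdvd : (orbit ↥M' a).ncard ∣ p := hX ▸ hblock.ncard_dvd_card hne
  have h2le : 2 ≤ (orbit ↥M' a).ncard := by
    have h1 : a ∈ orbit ↥M' a := mem_orbit_self a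
    have h2 : σ a ∈ orbit ↥M' a := (horb a (σ a)).mpr ⟨σ, hσM, rfl⟩
    have : ({a, σ a} : Set X) ⊆ orbit ↥M' a := by
      intro z hz
      rcases hz with rfl | hz
      · exact h1
      · rcases hz with rfl; exact h2
    calc 2 = ({a, σ a} : Set X).ncard := by
          rw [Set.ncard_pair (Ne.symm ha)]
      _ ≤ (orbit ↥M' a).ncard := Set.ncard_le_ncard this (Set.toFinite _)
  have hcard : (orbit ↥M' a).ncard = p := by
    rcases (Nat.Prime.eq_one_or_self_of_dvd hp _ hdvd) with h | h
    · omega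
    · exact h
  have huniv : orbit ↥M' a = Set.univ := by
    apply Set.eq_of_subset_of_ncard_le (Set.subset_univ _)
    rw [Set.ncard_univ, hX, hcard]
  -- conclude transitivity
  intro x y
  have hx : x ∈ orbit ↥M' a := huniv ▸ Set.mem_univ x
  have hy : y ∈ orbit ↥M' a := huniv ▸ Set.mem_univ y
  obtain ⟨mx, hmx, hmxa⟩ := (horb a x).mp hx
  obtain ⟨my, hmy, hmya⟩ := (horb a y).mp hy
  refine ⟨my * mx⁻¹, mul_mem hmy (inv_mem hmx), ?_⟩
  rw [← hmxa, ← hmya]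
  simp [Perm.mul_apply]


-- a solvable transitive group is nontrivial and has proper commutator subgroup

lemma commutator_ne_self (hp : p.Prime) [Finite X] (hX : Nat.card X = p)
    (G : Subgroup (Perm X)) (hG : ∀ x y : X, ∃ g ∈ G, g x = y)
    (hsolv : IsSolvable ↥G) : ⁅G, G⁆ ≠ G := by
  intro hEq
  -- G is nontrivial
  have hnontriv : ∃ g ∈ G, g ≠ 1 := by
    have h2 : Nontrivial X := by
      rw [← Finite.one_lt_card_iff_nontrivial, hX]
      exact hp.one_lt
    obtain ⟨x, y, hxy⟩ := h2
    obtain ⟨g, hg, hgx⟩ := hG x y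
    exact ⟨g, hg, fun h => hxy (by rw [← hgx, h]; rfl)⟩
  -- commutator of ↥G is ⊤
  have hmap : Subgroup.map G.subtype (_root_.commutator ↥G) = ⁅G, G⁆ := by
    rw [_root_.commutator, Subgroup.map_commutator]
    have htop : Subgroup.map G.subtype ⊤ = G := by
      rw [← MonoidHom.range_eq_map, Subgroup.range_subtype]
    rw [htop]
  have htop : _root_.commutator ↥G = ⊤ := by
    apply Subgroup.map_injective G.subtype_injective
    rw [hmap, hEq, ← MonoidHom.range_eq_map, Subgroup.range_subtype]
  -- derived series is constant ⊤
  have hder : ∀ n, derivedSeries ↥G n = ⊤ := by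
    intro n
    induction n with
    | zero => rfl
    | succ n ih => rw [derivedSeries_succ, ih, ← _root_.commutator_def, htop]
  obtain ⟨n, hn⟩ := hsolv
  have : (⊤ : Subgroup ↥G) = ⊥ := by rw [← hder n, hn]
  obtain ⟨g, hg, hg1⟩ := hnontriv
  have : (⟨g, hg⟩ : ↥G) ∈ (⊥ : Subgroup ↥G) := this ▸ Subgroup.mem_top _
  exact hg1 (congrArg Subtype.val (Subgroup.mem_bot.mp this))

lemma exists_regular (hp : p.Prime) [Finite X] (hX : Nat.card X = p) :
    ∀ (n : ℕ) (G : Subgroup (Perm X)), (∀ x y : X, ∃ g ∈ G, g x = y) → IsSolvable ↥G →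
      Nat.card ↥G ≤ n → ∃ N : Subgroup (Perm X), IsRegularSubgroup N ∧ G ≤ Subgroup.normalizer (N : Set (Perm X)) := by
  haveI : Fact p.Prime := ⟨hp⟩
  haveI : Nonempty X := Nat.card_pos_iff.mp (by rw [hX]; exact hp.pos) |>.1
  intro n
  induction n with
  | zero =>
    intro G _ _ hle
    have : 0 < Nat.card ↥G := Nat.card_pos
    omega
  | succ n ih =>
    intro G hG hsolv hle
    by_cases hab : ⁅G, G⁆ = ⊥
    · -- abelian case
      have hcomm : ∀ a ∈ G, ∀ b ∈ G, a * b = b * a := by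
        intro a ha b hb
        have h1 : ⁅a, b⁆ ∈ ⁅G, G⁆ := Subgroup.commutator_mem_commutator ha hb
        rw [hab, Subgroup.mem_bot] at h1
        exact commutatorElement_eq_one_iff_mul_comm.mp h1
      exact ⟨G, ⟨hG, card_eq_of_comm G hcomm hG⟩, le_normalizer⟩
    · set M : Subgroup (Perm X) := ⁅G, G⁆ with hMdef
      have hMle : M ≤ G := by
        rw [hMdef]
        apply Subgroup.commutator_le.mpr
        intro a ha b hb
        exact mul_mem (mul_mem (mul_mem ha hb) (inv_mem ha)) (inv_mem hb)
      have hconj : ∀ g ∈ G, ∀ m ∈ M, g * m * g⁻¹ ∈ M := by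
        intro g hg m hm
        rw [hMdef]
        have : Subgroup.map (MulAut.conj g).toMonoidHom ⁅G, G⁆ ≤ ⁅G, G⁆ := by
          rw [Subgroup.map_commutator]
          apply Subgroup.commutator_mono <;>
          · intro x hx
            obtain ⟨y, hy, rfl⟩ := hx
            simpa using mul_mem (mul_mem hg hy) (inv_mem hg)
        exact this ⟨m, hm, rfl⟩
      have hMG : M ≠ G := commutator_ne_self hp hX G hG hsolv
      have hlt : M < G := lt_of_le_of_ne hMle hMG
      have hcardlt : Nat.card ↥M < Nat.card ↥G := by
        have hsub : (M : Set (Perm X)) ⊂ (G : Set (Perm X)) := by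
          rw [Set.ssubset_iff_subset_ne]
          exact ⟨hMle, fun h => hMG (SetLike.ext' h)⟩
        have := Set.ncard_lt_ncard hsub (Set.toFinite _)
        rwa [← Nat.card_coe_set_eq, ← Nat.card_coe_set_eq] at this
      haveI : Group.IsSolvable ↥G := hsolv
      have hMsolv : IsSolvable ↥M :=
        solvable_of_solvable_injective (Subgroup.inclusion_injective hMle)
      have hMtrans : ∀ x y : X, ∃ m ∈ M, m x = y :=
        transitive_of_normalized hp hX G M hG hMle hconj hab
      obtain ⟨N, hN, hMN⟩ := ih M hMtrans hMsolv (by omega)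
      refine ⟨N, hN, ?_⟩
      intro g hg
      set e : Perm X ≃* Perm X := MulAut.conj g with hedef
      set Ng : Subgroup (Perm X) := N.map e.toMonoidHom with hNgdef
      have hNgreg : IsRegularSubgroup Ng := by
        constructor
        · intro x y
          obtain ⟨n, hn, hnx⟩ := hN.1 (g⁻¹ x) (g⁻¹ y)
          refine ⟨g * n * g⁻¹, ⟨n, hn, by simp [hedef]⟩, ?_⟩
          show g (n (g⁻¹ x)) = y
          rw [hnx]
          simp
        · rw [← hN.2]
          exact (Nat.card_congr (Subgroup.equivMapOfInjective N e.toMonoidHom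
            e.injective).toEquiv).symm
      have hMNg : M ≤ Subgroup.normalizer (Ng : Set (Perm X)) := by
        have hnorm : Subgroup.normalizer (Ng : Set (Perm X)) = Subgroup.map e.toMonoidHom (Subgroup.normalizer (N : Set (Perm X))) :=
          (Subgroup.map_equiv_normalizer_eq N e).symm
        rw [hnorm]
        intro m hm
        refine ⟨g⁻¹ * m * g, hMN (by simpa using hconj g⁻¹ (inv_mem hg) m hm), ?_⟩
        simp [hedef]
        group
      have heq : N = Ng := regular_unique hp hX M hMtrans N Ng hN hMN hNgreg hMNg
      rw [Subgroup.mem_normalizer_iff]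
      intro h
      constructor
      · intro hh
        have : e h ∈ Ng := ⟨h, hh, rfl⟩
        rw [← heq] at this
        simpa [hedef] using this
      · intro hh
        have : g * h * g⁻¹ ∈ Ng := by rw [← heq]; exact hh
        obtain ⟨n, hn, hen⟩ := this
        have : n = h := by
          have : g * n * g⁻¹ = g * h * g⁻¹ := by simpa [hedef] using hen
          group at this
          exact mul_left_cancel (mul_right_cancel this)
        rwa [← this]
end Stmt11Aux

/-- Let `p` be a prime and `G` a transitive subgroup of `Sym(X)` with `|X| = p`.
There is a regular subgroup of `Sym(X)` normalized by `G` iff `G` is solvable;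
moreover when `G` is solvable such a regular subgroup is unique and is cyclic
of order `p`. -/
theorem stmt_11 {p : ℕ} (hp : p.Prime) {X : Type*} [Finite X]
    (hX : Nat.card X = p)
    (G : Subgroup (Equiv.Perm X)) (hG : ∀ x y : X, ∃ g ∈ G, g x = y) :
    ((∃ N : Subgroup (Equiv.Perm X), IsRegularSubgroup N ∧ G ≤ Subgroup.normalizer (N : Set (Equiv.Perm X))) ↔
      IsSolvable ↥G) ∧
    (IsSolvable ↥G →
      (∀ N₁ N₂ : Subgroup (Equiv.Perm X),
        IsRegularSubgroup N₁ → G ≤ Subgroup.normalizer (N₁ : Set (Equiv.Perm X)) →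
        IsRegularSubgroup N₂ → G ≤ Subgroup.normalizer (N₂ : Set (Equiv.Perm X)) → N₁ = N₂) ∧
      (∀ N : Subgroup (Equiv.Perm X), IsRegularSubgroup N → G ≤ Subgroup.normalizer (N : Set (Equiv.Perm X)) →
        IsCyclic ↥N ∧ Nat.card ↥N = p)) := by
  haveI : Fact p.Prime := ⟨hp⟩
  constructor
  · constructor
    · rintro ⟨N, hN, hGN⟩
      haveI : Group.IsSolvable ↥(Subgroup.normalizer (N : Set (Perm X))) := Stmt11Aux.normalizer_solvable hp hX N hN.1 (hN.2.trans hX)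
      exact solvable_of_solvable_injective (Subgroup.inclusion_injective hGN)
    · intro hsolv
      exact Stmt11Aux.exists_regular hp hX (Nat.card ↥G) G hG hsolv le_rfl
  · intro hsolv
    refine ⟨fun N₁ N₂ h₁ hn₁ h₂ hn₂ =>
      Stmt11Aux.regular_unique hp hX G hG N₁ N₂ h₁ hn₁ h₂ hn₂, fun N hN _ =>
      ⟨isCyclic_of_prime_card (hN.2.trans hX), hN.2.trans hX⟩⟩
end

section
/- Let V = (ℤ/2ℤ) × (ℤ/2ℤ) and let G ≤ Sym(V) be the image of the left regular representation of V. Then there are exactly 4 regular subgroups of Sym(V) normalized by G: exactly 3 cyclic of order 4 and exactly one isomorphic to V (namely G itself). (Hence a Galois extension of degree 4 with Galois group C₂×C₂ has exactly 4 Hopf Galois structures: 3 of type C₄ and 1 of type C₂×C₂.) -/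
/-- The Klein four group `V = (ℤ/2ℤ) × (ℤ/2ℤ)` (written multiplicatively). -/
abbrev V13 := Multiplicative (ZMod 2 × ZMod 2)

/-- The image of the left regular representation of `V` in `Sym(V)`. -/
def G13 : Subgroup (Equiv.Perm V13) := (MulAction.toPermHom V13 V13).range

set_option maxRecDepth 20000
set_option synthInstance.maxHeartbeats 2000000
set_option synthInstance.maxSize 2048
set_option maxHeartbeats 4000000

namespace Aux13

def x01 : V13 := Multiplicative.ofAdd (0,1)
def x10 : V13 := Multiplicative.ofAdd (1,0)
def x11 : V13 := Multiplicative.ofAdd (1,1)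

def cyc (a b c d : V13) : Equiv.Perm V13 := Equiv.swap a b * Equiv.swap b c * Equiv.swap c d
def c1 : Equiv.Perm V13 := cyc 1 x01 x10 x11
def c2 : Equiv.Perm V13 := cyc 1 x01 x11 x10
def c3 : Equiv.Perm V13 := cyc 1 x10 x01 x11
def tp (v : V13) : Equiv.Perm V13 := MulAction.toPerm v

def FK : Finset (Equiv.Perm V13) := {1, tp x01, tp x10, tp x11}
def FA : Finset (Equiv.Perm V13) := {1, c1, c1^2, c1^3}
def FB : Finset (Equiv.Perm V13) := {1, c2, c2^2, c2^3}
def FC : Finset (Equiv.Perm V13) := {1, c3, c3^2, c3^3}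

def finSub (s : Finset (Equiv.Perm V13)) (h1 : (1:Equiv.Perm V13) ∈ s)
    (hm : ∀ a ∈ s, ∀ b ∈ s, a*b ∈ s) (hi : ∀ a ∈ s, a⁻¹ ∈ s) :
    Subgroup (Equiv.Perm V13) where
  carrier := s
  one_mem' := h1
  mul_mem' := fun ha hb => hm _ ha _ hb
  inv_mem' := fun ha => hi _ ha

theorem mem_finSub {s h1 hm hi} {x : Equiv.Perm V13} : x ∈ finSub s h1 hm hi ↔ x ∈ s := Iff.rfl

def A : Subgroup (Equiv.Perm V13) := finSub FA (by decide) (by decide) (by decide)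
def B : Subgroup (Equiv.Perm V13) := finSub FB (by decide) (by decide) (by decide)
def C : Subgroup (Equiv.Perm V13) := finSub FC (by decide) (by decide) (by decide)

theorem mem_A {x : Equiv.Perm V13} : x ∈ A ↔ x ∈ FA := Iff.rfl
theorem mem_B {x : Equiv.Perm V13} : x ∈ B ↔ x ∈ FB := Iff.rfl
theorem mem_C {x : Equiv.Perm V13} : x ∈ C ↔ x ∈ FC := Iff.rfl

theorem mem_G13 {x : Equiv.Perm V13} : x ∈ G13 ↔ x ∈ FK := by
  constructor
  · rintro ⟨v, rfl⟩
    have : MulAction.toPermHom V13 V13 v = tp v := rfl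
    rw [this]
    revert v; decide
  · intro hx
    fin_cases hx
    · exact ⟨1, map_one _⟩
    · exact ⟨x01, rfl⟩
    · exact ⟨x10, rfl⟩
    · exact ⟨x11, rfl⟩

theorem cardV : Nat.card V13 = 4 := by
  rw [Nat.card_eq_fintype_card]; rfl

theorem card_of_finset {N : Subgroup (Equiv.Perm V13)} {s : Finset (Equiv.Perm V13)}
    (h : ∀ x, x ∈ N ↔ x ∈ s) : Nat.card ↥N = s.card := by
  rw [Nat.card_congr (Equiv.subtypeEquivRight h), Nat.card_eq_fintype_card, Fintype.card_coe]

theorem cases_V13 (y : V13) : y = 1 ∨ y = x01 ∨ y = x10 ∨ y = x11 := by revert y; decide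

theorem big : ∀ a b c : Equiv.Perm V13, a 1 = x01 → b 1 = x10 → c 1 = x11 →
    (∀ p ∈ ({1,a,b,c} : Finset (Equiv.Perm V13)), ∀ q ∈ ({1,a,b,c} : Finset (Equiv.Perm V13)),
      p*q ∈ ({1,a,b,c} : Finset (Equiv.Perm V13))) →
    (∀ g ∈ FK, ∀ p ∈ ({1,a,b,c} : Finset (Equiv.Perm V13)),
      g*p*g⁻¹ ∈ ({1,a,b,c} : Finset (Equiv.Perm V13))) →
    ({1,a,b,c} : Finset (Equiv.Perm V13)) = FA ∨ ({1,a,b,c} : Finset (Equiv.Perm V13)) = FB ∨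
    ({1,a,b,c} : Finset (Equiv.Perm V13)) = FC ∨ ({1,a,b,c} : Finset (Equiv.Perm V13)) = FK := by
  decide

theorem main (N : Subgroup (Equiv.Perm V13)) :
    (IsRegularSubgroup N ∧ G13 ≤ Subgroup.normalizer (N : Set (Equiv.Perm V13))) ↔ (N = A ∨ N = B ∨ N = C ∨ N = G13) := by
  constructor
  · rintro ⟨⟨htrans, hcard⟩, hnorm⟩
    choose σ hmem hact using fun y => htrans 1 y
    have hinj : Function.Injective (fun y => (⟨σ y, hmem y⟩ : ↥N)) := by
      intro y z h
      have := congrArg (fun n : ↥N => (n : Equiv.Perm V13) 1) h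
      simpa [hact] using this
    have hbij : Function.Bijective (fun y => (⟨σ y, hmem y⟩ : ↥N)) :=
      (Nat.bijective_iff_injective_and_card _).mpr ⟨hinj, by rw [hcard]⟩
    have hch : ∀ g : Equiv.Perm V13, g ∈ N ↔ g ∈ ({1, σ x01, σ x10, σ x11} : Finset _) := by
      intro g
      constructor
      · intro hg
        obtain ⟨y, hy⟩ := hbij.2 ⟨g, hg⟩
        have hy' : σ y = g := congrArg Subtype.val hy
        rcases cases_V13 y with h | h | h | h <;> subst h
        · have h1 : σ (1:V13) = 1 := by
            obtain ⟨z, hz⟩ := hbij.2 ⟨1, N.one_mem⟩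
            have hz' : σ z = 1 := congrArg Subtype.val hz
            have : z = 1 := by
              have := hact z; rw [hz'] at this; simpa using this.symm
            rw [← this] at *; exact hz'
          simp [← hy', h1]
        · simp [← hy']
        · simp [← hy']
        · simp [← hy']
      · intro hg
        simp only [Finset.mem_insert, Finset.mem_singleton] at hg
        rcases hg with rfl | rfl | rfl | rfl
        · exact N.one_mem
        all_goals exact hmem _
    have hclos : ∀ p ∈ ({1, σ x01, σ x10, σ x11} : Finset _),
        ∀ q ∈ ({1, σ x01, σ x10, σ x11} : Finset _),
        p*q ∈ ({1, σ x01, σ x10, σ x11} : Finset _) := by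
      intro p hp q hq
      exact (hch _).mp (N.mul_mem ((hch _).mpr hp) ((hch _).mpr hq))
    have hconj : ∀ g ∈ FK, ∀ p ∈ ({1, σ x01, σ x10, σ x11} : Finset _),
        g*p*g⁻¹ ∈ ({1, σ x01, σ x10, σ x11} : Finset _) := by
      intro g hg p hp
      have hgG : g ∈ G13 := mem_G13.mpr hg
      have := (Subgroup.mem_normalizer_iff.mp (hnorm hgG) p).mp ((hch _).mpr hp)
      exact (hch _).mp this
    rcases big (σ x01) (σ x10) (σ x11) (hact x01) (hact x10) (hact x11) hclos hconj with
      h | h | h | h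
    · exact Or.inl (SetLike.ext fun x => by rw [hch, h, mem_A])
    · exact Or.inr (Or.inl (SetLike.ext fun x => by rw [hch, h, mem_B]))
    · exact Or.inr (Or.inr (Or.inl (SetLike.ext fun x => by rw [hch, h, mem_C])))
    · exact Or.inr (Or.inr (Or.inr (SetLike.ext fun x => by rw [hch, h, mem_G13])))
  · have reg : ∀ (M : Subgroup (Equiv.Perm V13)) (s : Finset (Equiv.Perm V13)),
        (∀ x, x ∈ M ↔ x ∈ s) → s.card = 4 → (∀ x y : V13, ∃ n ∈ s, n x = y) →
        (∀ g ∈ FK, ∀ h : Equiv.Perm V13, h ∈ s ↔ g*h*g⁻¹ ∈ s) →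
        IsRegularSubgroup M ∧ G13 ≤ Subgroup.normalizer (M : Set (Equiv.Perm V13)) := by
      intro M s hmem hc htr hcj
      refine ⟨⟨fun x y => ?_, by rw [card_of_finset hmem, hc, cardV]⟩, ?_⟩
      · obtain ⟨n, hn, hnx⟩ := htr x y
        exact ⟨n, (hmem n).mpr hn, hnx⟩
      · intro g hg
        rw [Subgroup.mem_normalizer_iff]
        intro h
        rw [hmem, hmem, hcj g (mem_G13.mp hg) h]
    rintro (rfl | rfl | rfl | rfl)
    · exact reg A FA (fun _ => mem_A) (by decide) (by decide) (by decide)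
    · exact reg B FB (fun _ => mem_B) (by decide) (by decide) (by decide)
    · exact reg C FC (fun _ => mem_C) (by decide) (by decide) (by decide)
    · exact reg G13 FK (fun _ => mem_G13) (by decide) (by decide) (by decide)


theorem cardA : Nat.card ↥A = 4 := (card_of_finset (fun _ => mem_A)).trans (by decide)
theorem cardB : Nat.card ↥B = 4 := (card_of_finset (fun _ => mem_B)).trans (by decide)
theorem cardC : Nat.card ↥C = 4 := (card_of_finset (fun _ => mem_C)).trans (by decide)

theorem isCyclic_of_gen (H : Subgroup (Equiv.Perm V13)) (g : Equiv.Perm V13) (hg : g ∈ H)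
    (h : ∀ x ∈ H, x = 1 ∨ x = g ∨ x = g^2 ∨ x = g^3) : IsCyclic ↥H := by
  refine ⟨⟨⟨g, hg⟩, fun x => ?_⟩⟩
  have hk : ∃ k : ℕ, x.1 = g ^ k := by
    rcases h x.1 x.2 with hx | hx | hx | hx
    exacts [⟨0, by simpa using hx⟩, ⟨1, by simpa using hx⟩, ⟨2, hx⟩, ⟨3, hx⟩]
  obtain ⟨k, hk⟩ := hk
  exact ⟨(k : ℤ), Subtype.ext (by
    rw [SubgroupClass.coe_zpow, zpow_natCast]
    exact hk.symm)⟩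

theorem cycA : IsCyclic ↥A :=
  isCyclic_of_gen A c1 (by rw [mem_A]; decide) (fun x hx => by rw [mem_A] at hx; revert hx; revert x; decide)
theorem cycB : IsCyclic ↥B :=
  isCyclic_of_gen B c2 (by rw [mem_B]; decide) (fun x hx => by rw [mem_B] at hx; revert hx; revert x; decide)
theorem cycC : IsCyclic ↥C :=
  isCyclic_of_gen C c3 (by rw [mem_C]; decide) (fun x hx => by rw [mem_C] at hx; revert hx; revert x; decide)

theorem notCyclicV : ¬ IsCyclic V13 := by
  rintro ⟨g, hg⟩
  have hsq : ∀ v : V13, v^2 = 1 := by decide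
  have h2 : g ^ (2:ℤ) = 1 := by
    rw [show (2:ℤ) = ((2:ℕ):ℤ) from rfl, zpow_natCast]; exact hsq g
  have hz : ∀ x : V13, x = 1 ∨ x = g := by
    intro x
    obtain ⟨k, hk⟩ := hg x
    have hk' : g ^ k = x := hk
    rcases Int.even_or_odd k with ⟨m, hm⟩ | ⟨m, hm⟩
    · left; rw [← hk', hm, ← two_mul, zpow_mul, h2, one_zpow]
    · right; rw [← hk', hm, zpow_add, zpow_mul, h2, one_zpow, zpow_one, one_mul]
  rcases hz x01 with h | h
  · exact absurd h (by decide)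
  · rcases hz x10 with h' | h'
    · exact absurd h' (by decide)
    · rw [← h'] at h; exact absurd h (by decide)

theorem toPermHom_inj : Function.Injective (MulAction.toPermHom V13 V13) := by
  intro g h hgh
  have := congrArg (fun p : Equiv.Perm V13 => p (1:V13)) hgh
  simpa [MulAction.toPermHom, MulAction.toPerm] using this

noncomputable def isoG13 : ↥G13 ≃* V13 := (MonoidHom.ofInjective toPermHom_inj).symm

theorem notCycG13 : ¬ IsCyclic ↥G13 := fun h =>
  haveI := h
  notCyclicV (isCyclic_of_surjective isoG13 isoG13.surjective)

theorem notIsoA : ¬ Nonempty (↥A ≃* V13) := fun ⟨e⟩ =>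
  haveI := cycA
  notCyclicV (isCyclic_of_surjective e e.surjective)
theorem notIsoB : ¬ Nonempty (↥B ≃* V13) := fun ⟨e⟩ =>
  haveI := cycB
  notCyclicV (isCyclic_of_surjective e e.surjective)
theorem notIsoC : ¬ Nonempty (↥C ≃* V13) := fun ⟨e⟩ =>
  haveI := cycC
  notCyclicV (isCyclic_of_surjective e e.surjective)

theorem neAB : A ≠ B := fun h => absurd (mem_B.mp (h ▸ mem_A.mpr (by decide : c1 ∈ FA))) (by decide)
theorem neAC : A ≠ C := fun h => absurd (mem_C.mp (h ▸ mem_A.mpr (by decide : c1 ∈ FA))) (by decide)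
theorem neBC : B ≠ C := fun h => absurd (mem_C.mp (h ▸ mem_B.mpr (by decide : c2 ∈ FB))) (by decide)
theorem neAG : A ≠ G13 := fun h => absurd (mem_G13.mp (h ▸ mem_A.mpr (by decide : c1 ∈ FA))) (by decide)
theorem neBG : B ≠ G13 := fun h => absurd (mem_G13.mp (h ▸ mem_B.mpr (by decide : c2 ∈ FB))) (by decide)
theorem neCG : C ≠ G13 := fun h => absurd (mem_G13.mp (h ▸ mem_C.mpr (by decide : c3 ∈ FC))) (by decide)

end Aux13

/-- There are exactly 4 regular subgroups of `Sym(V)`, `V = C₂ × C₂`, normalized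
by the image `G` of the left regular representation of `V`: exactly 3 cyclic of
order 4 and exactly one isomorphic to `V` (namely `G` itself). -/
theorem stmt_13 :
    Nat.card {N : Subgroup (Equiv.Perm V13) //
        IsRegularSubgroup N ∧ G13 ≤ Subgroup.normalizer (N : Set (Equiv.Perm V13))} = 4 ∧
    Nat.card {N : Subgroup (Equiv.Perm V13) //
        IsRegularSubgroup N ∧ G13 ≤ Subgroup.normalizer (N : Set (Equiv.Perm V13)) ∧
        IsCyclic ↥N ∧ Nat.card ↥N = 4} = 3 ∧
    Nat.card {N : Subgroup (Equiv.Perm V13) //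
        IsRegularSubgroup N ∧ G13 ≤ Subgroup.normalizer (N : Set (Equiv.Perm V13)) ∧
        Nonempty (↥N ≃* V13)} = 1 ∧
    (∀ N : Subgroup (Equiv.Perm V13),
        IsRegularSubgroup N → G13 ≤ Subgroup.normalizer (N : Set (Equiv.Perm V13)) →
        Nonempty (↥N ≃* V13) → N = G13) := by
  open Aux13 in
  have last : ∀ N : Subgroup (Equiv.Perm V13),
      IsRegularSubgroup N → G13 ≤ Subgroup.normalizer (N : Set (Equiv.Perm V13)) → Nonempty (↥N ≃* V13) → N = G13 := by
    intro N hreg hnorm hiso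
    rcases (main N).mp ⟨hreg, hnorm⟩ with rfl | rfl | rfl | rfl
    · exact absurd hiso notIsoA
    · exact absurd hiso notIsoB
    · exact absurd hiso notIsoC
    · rfl
  open Aux13 in
  refine ⟨?_, ?_, ?_, last⟩
  · have hset : {N : Subgroup (Equiv.Perm V13) | IsRegularSubgroup N ∧ G13 ≤ Subgroup.normalizer (N : Set (Equiv.Perm V13))}
        = {A, B, C, G13} := Set.ext fun N => by
      rw [Set.mem_setOf_eq, main N]; simp [Set.mem_insert_iff]
    rw [show ({N : Subgroup (Equiv.Perm V13) //
        IsRegularSubgroup N ∧ G13 ≤ Subgroup.normalizer (N : Set (Equiv.Perm V13))}) =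
        ↥{N : Subgroup (Equiv.Perm V13) | IsRegularSubgroup N ∧ G13 ≤ Subgroup.normalizer (N : Set (Equiv.Perm V13))} from rfl,
      Nat.card_coe_set_eq, hset]
    rw [Set.ncard_insert_of_notMem (by simp [neAB, neAC, neAG]),
      Set.ncard_insert_of_notMem (by simp [neBC, neBG]),
      Set.ncard_insert_of_notMem (by simp [neCG]), Set.ncard_singleton]
  · have hset : {N : Subgroup (Equiv.Perm V13) | IsRegularSubgroup N ∧ G13 ≤ Subgroup.normalizer (N : Set (Equiv.Perm V13)) ∧
        IsCyclic ↥N ∧ Nat.card ↥N = 4} = {A, B, C} := Set.ext fun N => by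
      rw [Set.mem_setOf_eq]
      constructor
      · rintro ⟨hreg, hnorm, hcyc, -⟩
        rcases (main N).mp ⟨hreg, hnorm⟩ with rfl | rfl | rfl | rfl
        · exact Set.mem_insert _ _
        · exact Set.mem_insert_of_mem _ (Set.mem_insert _ _)
        · exact Set.mem_insert_of_mem _ (Set.mem_insert_of_mem _ rfl)
        · exact absurd hcyc notCycG13
      · intro hN
        simp only [Set.mem_insert_iff, Set.mem_singleton_iff] at hN
        rcases hN with rfl | rfl | rfl
        · have hPN := (main A).mpr (Or.inl rfl)
          exact ⟨hPN.1, hPN.2, cycA, cardA⟩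
        · have hPN := (main B).mpr (Or.inr (Or.inl rfl))
          exact ⟨hPN.1, hPN.2, cycB, cardB⟩
        · have hPN := (main C).mpr (Or.inr (Or.inr (Or.inl rfl)))
          exact ⟨hPN.1, hPN.2, cycC, cardC⟩
    rw [show ({N : Subgroup (Equiv.Perm V13) //
        IsRegularSubgroup N ∧ G13 ≤ Subgroup.normalizer (N : Set (Equiv.Perm V13)) ∧ IsCyclic ↥N ∧ Nat.card ↥N = 4}) =
        ↥{N : Subgroup (Equiv.Perm V13) | IsRegularSubgroup N ∧ G13 ≤ Subgroup.normalizer (N : Set (Equiv.Perm V13)) ∧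
          IsCyclic ↥N ∧ Nat.card ↥N = 4} from rfl,
      Nat.card_coe_set_eq, hset]
    rw [Set.ncard_insert_of_notMem (by simp [neAB, neAC]),
      Set.ncard_insert_of_notMem (by simp [neBC]), Set.ncard_singleton]
  · have hset : {N : Subgroup (Equiv.Perm V13) | IsRegularSubgroup N ∧ G13 ≤ Subgroup.normalizer (N : Set (Equiv.Perm V13)) ∧
        Nonempty (↥N ≃* V13)} = {G13} := Set.ext fun N => by
      rw [Set.mem_setOf_eq, Set.mem_singleton_iff]
      constructor
      · rintro ⟨hreg, hnorm, hiso⟩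
        exact last N hreg hnorm hiso
      · rintro rfl
        have hPN : IsRegularSubgroup G13 ∧ G13 ≤ Subgroup.normalizer (G13 : Set (Equiv.Perm V13)) := (main G13).mpr (by tauto)
        exact ⟨hPN.1, hPN.2, ⟨isoG13⟩⟩
    rw [show ({N : Subgroup (Equiv.Perm V13) //
        IsRegularSubgroup N ∧ G13 ≤ Subgroup.normalizer (N : Set (Equiv.Perm V13)) ∧ Nonempty (↥N ≃* V13)}) =
        ↥{N : Subgroup (Equiv.Perm V13) | IsRegularSubgroup N ∧ G13 ≤ Subgroup.normalizer (N : Set (Equiv.Perm V13)) ∧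
          Nonempty (↥N ≃* V13)} from rfl,
      Nat.card_coe_set_eq, hset, Set.ncard_singleton]
end

section
/- Let G ≤ Sym(S₃) be the image of the left regular representation of the symmetric group S₃, and let N₁, N₂ be any two regular subgroups of Sym(S₃) that are cyclic of order 6 and normalized by G. Then N₁ and N₂ are G-isomorphic: there exists a group isomorphism φ: N₁ → N₂ such that φ(g n g⁻¹) = g φ(n) g⁻¹ for all g ∈ G and all n ∈ N₁. (This is the smallest-degree instance of non-equal Hopf Galois structures with isomorphic underlying Hopf algebras: on a Galois extension of degree 6 with group S₃, the three Hopf Galois structures of cyclic type C₆ have pairwise isomorphic Hopf algebras.) -/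
/-- The symmetric group `S₃`. -/
abbrev S3 := Equiv.Perm (Fin 3)

/-- The image of the left regular representation of `S₃` in `Sym(S₃)`. -/
def G15 : Subgroup (Equiv.Perm S3) := (MulAction.toPermHom S3 S3).range

private abbrev lam : S3 →* Equiv.Perm S3 := MulAction.toPermHom S3 S3

private lemma lam_apply (s x : S3) : lam s x = s * x := rfl

/-- Conjugation by `lam s` sends the generator to a `ZMod 6`-determined power. -/
private lemma key (N : Subgroup (Equiv.Perm S3)) (c : IsCyclic ↥N)
    (o : Nat.card ↥N = 6) (hn : G15 ≤ Subgroup.normalizer (N : Set (Equiv.Perm S3))) :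
    ∀ s : S3,
      (Equiv.Perm.sign s = 1 → ∀ n ∈ N, lam s * n * (lam s)⁻¹ = n) ∧
      (Equiv.Perm.sign s = -1 → ∀ n ∈ N, lam s * n * (lam s)⁻¹ = n⁻¹) := by
  obtain ⟨g₀, hg₀⟩ := c.exists_generator
  set σ : Equiv.Perm S3 := (g₀ : Equiv.Perm S3) with hσdef
  have hσN : σ ∈ N := g₀.2
  have hord : orderOf σ = 6 := by
    have h1 : orderOf g₀ = 6 := by
      rw [← o, ← Nat.card_zpowers, (Subgroup.eq_top_iff' (Subgroup.zpowers g₀)).mpr hg₀]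
      exact Nat.card_congr Subgroup.topEquiv.toEquiv
    rw [← h1]
    exact orderOf_injective N.subtype Subtype.val_injective g₀
  -- every element of N is a power of σ
  have hpow : ∀ n ∈ N, ∃ j : ℤ, n = σ ^ j := by
    intro n hnN
    obtain ⟨j, hj⟩ := hg₀ ⟨n, hnN⟩
    refine ⟨j, ?_⟩
    have := congrArg (Subtype.val) hj
    simp only [SubgroupClass.coe_zpow] at this
    exact this.symm
  -- conjugation sends σ into N, hence to a power σ ^ m
  have hconj : ∀ s : S3, ∃ m : ℤ, lam s * σ * (lam s)⁻¹ = σ ^ m := by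
    intro s
    have hmem : lam s * σ * (lam s)⁻¹ ∈ N :=
      (Subgroup.mem_normalizer_iff.mp (hn ⟨s, rfl⟩) σ).mp hσN
    exact hpow _ hmem
  -- iterated conjugation
  have hiter : ∀ s : S3, ∀ m : ℤ, lam s * σ * (lam s)⁻¹ = σ ^ m →
      ∀ k : ℕ, (lam s) ^ k * σ * ((lam s) ^ k)⁻¹ = σ ^ (m ^ k) := by
    intro s m hm k
    induction k with
    | zero => simp
    | succ k ih =>
      have : (lam s) ^ (k+1) * σ * ((lam s) ^ (k+1))⁻¹
          = (lam s) ^ k * (lam s * σ * (lam s)⁻¹) * ((lam s) ^ k)⁻¹ := by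
        group
      rw [this, hm, ← conj_zpow, ih, ← zpow_mul, pow_succ]
  -- even permutations centralize σ
  have heven : ∀ s : S3, Equiv.Perm.sign s = 1 → lam s * σ * (lam s)⁻¹ = σ := by
    intro s hs
    obtain ⟨m, hm⟩ := hconj s
    have hs3 : s ^ 3 = 1 := by
      have h : ∀ t : S3, Equiv.Perm.sign t = 1 → t ^ 3 = 1 := by decide
      exact h s hs
    have hg3 : (lam s) ^ 3 = 1 := by rw [← map_pow, hs3, map_one]
    have h3 := hiter s m hm 3
    rw [hg3] at h3
    simp only [one_mul, inv_one, mul_one] at h3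
    -- σ = σ ^ (m^3), so m^3 ≡ 1 [ZMOD 6]
    have hmod : ((m ^ 3 : ℤ) : ZMod 6) = ((1 : ℤ) : ZMod 6) := by
      have he : σ ^ (m ^ 3) = σ ^ (1 : ℤ) := by rw [zpow_one]; exact h3.symm
      have := (zpow_eq_zpow_iff_modEq (x := σ)).mp he
      rw [hord] at this
      exact (ZMod.intCast_eq_intCast_iff _ _ _).mpr this
    have hcube : ∀ x : ZMod 6, x ^ 3 = x := by decide
    push_cast at hmod
    rw [hcube] at hmod
    have : σ ^ m = σ ^ (1 : ℤ) := by
      rw [zpow_eq_zpow_iff_modEq, hord]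
      exact (ZMod.intCast_eq_intCast_iff _ _ _).mp (by push_cast; exact hmod)
    rw [hm, this, zpow_one]
  intro s
  constructor
  · -- even case
    intro hs n hnN
    obtain ⟨j, hj⟩ := hpow n hnN
    rw [hj, ← conj_zpow, heven s hs]
  · -- odd case
    intro hs n hnN
    obtain ⟨m, hm⟩ := hconj s
    have hs2 : s ^ 2 = 1 := by
      have h : ∀ t : S3, Equiv.Perm.sign t = -1 → t ^ 2 = 1 := by decide
      exact h s hs
    have hg2 : (lam s) ^ 2 = 1 := by rw [← map_pow, hs2, map_one]
    have h2 := hiter s m hm 2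
    rw [hg2] at h2
    simp only [one_mul, inv_one, mul_one] at h2
    have hmod : ((m : ZMod 6)) ^ 2 = 1 := by
      have he : σ ^ (m ^ 2) = σ ^ (1 : ℤ) := by rw [zpow_one]; exact h2.symm
      have hmd := (zpow_eq_zpow_iff_modEq (x := σ)).mp he
      rw [hord] at hmd
      have h' := (ZMod.intCast_eq_intCast_iff _ _ _).mpr hmd
      push_cast at h'
      exact h'
    have hcases : (m : ZMod 6) = 1 ∨ (m : ZMod 6) = -1 := by
      revert hmod; generalize (m : ZMod 6) = x; revert x; decide
    rcases hcases with h1 | h1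
    · -- contradiction: σ would centralize all of lam S3
      exfalso
      have hfix : lam s * σ * (lam s)⁻¹ = σ := by
        rw [hm]
        have : σ ^ m = σ ^ (1 : ℤ) := by
          rw [zpow_eq_zpow_iff_modEq, hord]
          exact (ZMod.intCast_eq_intCast_iff _ _ _).mp (by push_cast; exact h1)
        rw [this, zpow_one]
      have hcomm : ∀ t : S3, lam t * σ = σ * lam t := by
        intro t
        rcases Int.units_eq_one_or (Equiv.Perm.sign t) with ht | ht
        · have := heven t ht
          rw [mul_inv_eq_iff_eq_mul] at this
          exact this
        · have hst : Equiv.Perm.sign (s⁻¹ * t) = 1 := by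
            rw [map_mul, map_inv, hs, ht]; decide
          have h1' := heven (s⁻¹ * t) hst
          rw [mul_inv_eq_iff_eq_mul] at h1'
          have hfix' : lam s * σ = σ * lam s := by
            rw [mul_inv_eq_iff_eq_mul] at hfix
            exact hfix
          have : lam t = lam s * lam (s⁻¹ * t) := by
            rw [← map_mul]; congr 1; group
          rw [this, mul_assoc, h1', ← mul_assoc, hfix', mul_assoc]
      -- σ is right multiplication by u := σ 1
      set u : S3 := σ 1 with hu
      have hform : ∀ t : S3, σ t = t * u := by
        intro t
        have := congrArg (fun p : Equiv.Perm S3 => p 1) (hcomm t)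
        have h2' : t * σ 1 = σ t := by
          simpa [Equiv.Perm.mul_apply, lam_apply] using this
        exact h2'.symm
      have hu23 : u ^ 2 = 1 ∨ u ^ 3 = 1 := by
        have h : ∀ v : S3, v ^ 2 = 1 ∨ v ^ 3 = 1 := by decide
        exact h u
      have hσ2 : ∀ t : S3, (σ ^ 2) t = t * u ^ 2 := by
        intro t
        rw [pow_two, Equiv.Perm.mul_apply, hform, hform, pow_two, mul_assoc]
      have hσ3 : ∀ t : S3, (σ ^ 3) t = t * u ^ 3 := by
        intro t
        have hx : σ ^ 3 = σ ^ 2 * σ := pow_succ σ 2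
        rw [hx, Equiv.Perm.mul_apply, hform, hσ2]
        group
      rcases hu23 with h | h
      · have : σ ^ 2 = 1 := by
          ext t; rw [hσ2]; rw [h, mul_one]; rfl
        have := orderOf_dvd_of_pow_eq_one this
        rw [hord] at this
        omega
      · have : σ ^ 3 = 1 := by
          ext t; rw [hσ3]; rw [h, mul_one]; rfl
        have := orderOf_dvd_of_pow_eq_one this
        rw [hord] at this
        omega
    · -- inversion case
      have hinv : lam s * σ * (lam s)⁻¹ = σ⁻¹ := by
        rw [hm]
        have : σ ^ m = σ ^ (-1 : ℤ) := by
          rw [zpow_eq_zpow_iff_modEq, hord]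
          exact (ZMod.intCast_eq_intCast_iff _ _ _).mp (by push_cast; exact h1)
        rw [this, zpow_neg_one]
      obtain ⟨j, hj⟩ := hpow n hnN
      rw [hj, ← conj_zpow, hinv, inv_zpow]

/-- Any two regular subgroups of `Sym(S₃)` which are cyclic of order 6 and
normalized by the image `G` of the left regular representation of `S₃` are
`G`-isomorphic: there is a group isomorphism `φ : N₁ → N₂` with
`φ(g n g⁻¹) = g φ(n) g⁻¹` for all `g ∈ G`, `n ∈ N₁`. -/
theorem stmt_15 (N₁ N₂ : Subgroup (Equiv.Perm S3))
    (h₁ : IsRegularSubgroup N₁) (h₂ : IsRegularSubgroup N₂)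
    (c₁ : IsCyclic ↥N₁) (o₁ : Nat.card ↥N₁ = 6)
    (c₂ : IsCyclic ↥N₂) (o₂ : Nat.card ↥N₂ = 6)
    (n₁ : G15 ≤ Subgroup.normalizer (N₁ : Set (Equiv.Perm S3))) (n₂ : G15 ≤ Subgroup.normalizer (N₂ : Set (Equiv.Perm S3))) :
    ∃ φ : ↥N₁ ≃* ↥N₂, ∀ g ∈ G15, ∀ (n : ↥N₁) (hgn : g * ↑n * g⁻¹ ∈ N₁),
      (↑(φ ⟨g * ↑n * g⁻¹, hgn⟩) : Equiv.Perm S3) = g * ↑(φ n) * g⁻¹ := by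
  refine ⟨mulEquivOfCyclicCardEq (o₁.trans o₂.symm), ?_⟩
  set φ := mulEquivOfCyclicCardEq (G := ↥N₁) (G' := ↥N₂) (o₁.trans o₂.symm)
  rintro g ⟨s, rfl⟩ n hgn
  have k₁ := key N₁ c₁ o₁ n₁ s
  have k₂ := key N₂ c₂ o₂ n₂ s
  rcases Int.units_eq_one_or (Equiv.Perm.sign s) with hs | hs
  · have e₁ : (⟨lam s * ↑n * (lam s)⁻¹, hgn⟩ : ↥N₁) = n :=
      Subtype.ext (k₁.1 hs ↑n n.2)
    rw [e₁, k₂.1 hs ↑(φ n) (φ n).2]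
  · have e₁ : (⟨lam s * ↑n * (lam s)⁻¹, hgn⟩ : ↥N₁) = n⁻¹ :=
      Subtype.ext (k₁.2 hs ↑n n.2)
    rw [e₁, map_inv, k₂.2 hs ↑(φ n) (φ n).2]
    rfl
end
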